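/- Let ρ₀ ∈ L^∞(ℝ^d) with ρ₀ ≥ 0, let r ≥ ‖ρ₀‖_{L^∞}, and let γ, T̃ > 0 be such that F maps B_{T,γ}(r) into itself for all T ∈ [0, T̃]. Then there exists T* ∈ (0, T̃] and a constant C < 1 such that for all ρ, ψ ∈ B_{T*,γ}(r) with ρ_0 = ψ_0 = ρ₀ one has ‖F(ρ) − F(ψ)‖_{T*,γ} ≤ C ‖ρ − ψ‖_{T*,γ}. -/

import Mathlib

open MeasureTheory Set

noncomputable section

/-- Euclidean space `ℝ^d`, modeled as functions `Fin d → ℝ`. -/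
abbrev Rd (d : ℕ) := Fin d → ℝ

/-- The (sup) `L^∞` norm of a function on `ℝ^d`. -/
def linf {d : ℕ} (f : Rd d → ℝ) : ℝ := ⨆ x, |f x|

/-- Membership in `L^∞(ℝ^d)`: measurable and (everywhere) bounded. -/
def MemLinf {d : ℕ} (f : Rd d → ℝ) : Prop := Measurable f ∧ ∃ M : ℝ, ∀ x, |f x| ≤ M

/-- `h(ρ,x) = (1/2) ∬ (c₁(x,y;z)+c₁(y,x;z)) ρ(y) dy dz + ⟨c₂⟩`. -/
def hker {d : ℕ} (c₁ : Rd d → Rd d → Rd d → ℝ) (C2 : ℝ) (ρ : Rd d → ℝ) (x : Rd d) : ℝ :=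
  1/2 * (∫ y, ∫ z, (c₁ x y z + c₁ y x z) * ρ y) + C2

/-- `R₂(ρ,x)`, the positive part of the right-hand side of the kinetic equation. -/
def R2 {d : ℕ} (c₁ : Rd d → Rd d → Rd d → ℝ) (c₂ : Rd d → Rd d → ℝ)
    (φ₁ φ₂ : Rd d → ℝ) (ρ : Rd d → ℝ) (x : Rd d) : ℝ :=
  1/2 * (∫ y, ∫ z, c₁ y z x * Real.exp (-∫ u, φ₁ (x - u) * ρ u) * ρ y * ρ z)
    + 1/2 * (∫ y, ∫ z, (c₁ x y z + c₁ y x z) *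
        (1 - Real.exp (-∫ u, φ₁ (z - u) * ρ u)) * ρ x * ρ y)
    + (∫ y, c₂ y x * Real.exp (-∫ u, φ₂ (x - u) * ρ u) * ρ y)
    + (∫ y, c₂ x y * (1 - Real.exp (-∫ u, φ₂ (y - u) * ρ u)) * ρ x)

/-- The fixed point map `F` given by the right-hand side of the integral equation. -/
def Fmap {d : ℕ} (c₁ : Rd d → Rd d → Rd d → ℝ) (c₂ : Rd d → Rd d → ℝ)
    (φ₁ φ₂ : Rd d → ℝ) (C2 : ℝ) (ρ₀ : Rd d → ℝ) (ρ : ℝ → Rd d → ℝ) (t : ℝ) (x : Rd d) : ℝ :=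
  ρ₀ x * Real.exp (-∫ s in (0:ℝ)..t, hker c₁ C2 (ρ s) x)
    + ∫ s in (0:ℝ)..t, R2 c₁ c₂ φ₁ φ₂ (ρ s) x * Real.exp (-∫ σ in s..t, hker c₁ C2 (ρ σ) x)

/-- The weighted norm `‖ρ‖_{T,γ} = sup_{t∈[0,T]} e^{-γ⟨c₂⟩t} ‖ρ_t‖_{L^∞}`. -/
def normTg {d : ℕ} (T γ C2 : ℝ) (ρ : ℝ → Rd d → ℝ) : ℝ :=
  ⨆ t : Icc (0:ℝ) T, Real.exp (-(γ * C2 * t.1)) * linf (ρ t.1)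

/-- Continuity on `S ⊆ ℝ` of a curve of functions, in the `L^∞` norm. -/
def LinfContOn {d : ℕ} (S : Set ℝ) (ρ : ℝ → Rd d → ℝ) : Prop :=
  ∀ t ∈ S, ∀ ε > 0, ∃ δ > 0, ∀ s ∈ S, |s - t| < δ → linf (fun x => ρ s x - ρ t x) < ε

/-- Membership in the ball `B_{T,γ}(r) ⊆ C([0,T] → L^∞)`. -/
def memB {d : ℕ} (T γ C2 r : ℝ) (ρ : ℝ → Rd d → ℝ) : Prop :=
  LinfContOn (Icc 0 T) ρ ∧ (∀ t ∈ Icc (0:ℝ) T, MemLinf (ρ t)) ∧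
    (∀ t ∈ Icc (0:ℝ) T, ∀ x, 0 ≤ ρ t x) ∧ normTg T γ C2 ρ ≤ r

/-- Differentiability at `t` (within `S ⊆ ℝ`) of a curve, in the `L^∞` norm,
with derivative `g`. -/
def HasLinfDerivWithinAt {d : ℕ} (ρ : ℝ → Rd d → ℝ) (g : Rd d → ℝ) (S : Set ℝ) (t : ℝ) : Prop :=
  ∀ ε > 0, ∃ δ > 0, ∀ s ∈ S, |s - t| < δ →
    linf (fun x => ρ s x - ρ t x - (s - t) * g x) ≤ ε * |s - t|

/-- The right-hand side of the kinetic equation: `−ρ(x) h(ρ,x) + R₂(ρ,x)`. -/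
def kderiv {d : ℕ} (c₁ : Rd d → Rd d → Rd d → ℝ) (c₂ : Rd d → Rd d → ℝ)
    (φ₁ φ₂ : Rd d → ℝ) (C2 : ℝ) (ρ : Rd d → ℝ) : Rd d → ℝ :=
  fun x => -(ρ x) * hker c₁ C2 ρ x + R2 c₁ c₂ φ₁ φ₂ ρ x

/-- `ρ` is a (local) classical solution of the kinetic equation on `[0,T]` with initial
value `ρ₀`: nonnegative and `L^∞`-valued, continuously differentiable in the `L^∞` norm,
and satisfying `d/dt ρ_t = −ρ_t·h(ρ_t,·) + R₂(ρ_t,·)`, `ρ_0 = ρ₀`. -/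
def IsSol {d : ℕ} (c₁ : Rd d → Rd d → Rd d → ℝ) (c₂ : Rd d → Rd d → ℝ)
    (φ₁ φ₂ : Rd d → ℝ) (C2 : ℝ) (ρ₀ : Rd d → ℝ) (T : ℝ) (ρ : ℝ → Rd d → ℝ) : Prop :=
  (∀ t ∈ Icc (0:ℝ) T, MemLinf (ρ t)) ∧ (∀ t ∈ Icc (0:ℝ) T, ∀ x, 0 ≤ ρ t x) ∧
    ρ 0 = ρ₀ ∧
    (∀ t ∈ Icc (0:ℝ) T, HasLinfDerivWithinAt ρ (kderiv c₁ c₂ φ₁ φ₂ C2 (ρ t)) (Icc 0 T) t) ∧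
    LinfContOn (Icc 0 T) (fun t => kderiv c₁ c₂ φ₁ φ₂ C2 (ρ t))


lemma abs_mul_le' {a b A B : ℝ} (ha : |a| ≤ A) (hb : |b| ≤ B) : |a * b| ≤ A * B := by
  rw [abs_mul]
  exact mul_le_mul ha hb (abs_nonneg b) ((abs_nonneg a).trans ha)

lemma abs01 {a A : ℝ} (h0 : 0 ≤ a) (h : a ≤ A) : |a| ≤ A := by rwa [abs_of_nonneg h0]

lemma exp_neg_lip {a b : ℝ} (ha : 0 ≤ a) (hb : 0 ≤ b) :
    |Real.exp (-a) - Real.exp (-b)| ≤ |a - b| := by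
  wlog h : b ≤ a generalizing a b
  · rw [abs_sub_comm, abs_sub_comm a b]; exact this hb ha (le_of_not_ge h)
  have h1 : Real.exp (-a) ≤ Real.exp (-b) := Real.exp_le_exp.2 (by linarith)
  have hid : Real.exp (-a) = Real.exp (-b) * Real.exp (b - a) := by
    rw [← Real.exp_add]; ring_nf
  have h2 := Real.add_one_le_exp (b - a)
  have h3 : Real.exp (-b) ≤ 1 := Real.exp_le_one_iff.2 (by linarith)
  have h4 : Real.exp (b - a) ≤ 1 := Real.exp_le_one_iff.2 (by linarith)
  have h5 : (0:ℝ) < Real.exp (-b) := Real.exp_pos _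
  rw [abs_of_nonpos (by linarith : Real.exp (-a) - Real.exp (-b) ≤ 0),
    abs_of_nonneg (by linarith : (0:ℝ) ≤ a - b)]
  nlinarith [mul_nonneg (sub_nonneg.2 h4) (sub_nonneg.2 h3)]

lemma linf_le {d : ℕ} {f : Rd d → ℝ} {M : ℝ} (h : ∀ x, |f x| ≤ M) : linf f ≤ M := ciSup_le h

lemma abs_le_linf {d : ℕ} {f : Rd d → ℝ} (hbd : ∃ M, ∀ x, |f x| ≤ M) (x : Rd d) :
    |f x| ≤ linf f := by
  obtain ⟨M, hM⟩ := hbd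
  exact le_ciSup ⟨M, by rintro - ⟨y, rfl⟩; exact hM y⟩ x

lemma integral_diff_le {α : Type*} [MeasurableSpace α] {μ : Measure α} {f g h : α → ℝ}
    (hf : Integrable f μ) (hg : Integrable g μ) (hh : Integrable h μ)
    (hfg : ∀ a, |f a - g a| ≤ h a) :
    |(∫ a, f a ∂μ) - ∫ a, g a ∂μ| ≤ ∫ a, h a ∂μ := by
  rw [← integral_sub hf hg]
  calc |∫ a, f a - g a ∂μ| ≤ ∫ a, |f a - g a| ∂μ := by
        simpa using norm_integral_le_integral_norm (fun a => f a - g a)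
    _ ≤ ∫ a, h a ∂μ := integral_mono (hf.sub hg).abs hh hfg

lemma abs_integral_le_of_le {α : Type*} [MeasurableSpace α] {μ : Measure α} {f h : α → ℝ}
    (hf : Integrable f μ) (hh : Integrable h μ) (hfh : ∀ a, |f a| ≤ h a) :
    |∫ a, f a ∂μ| ≤ ∫ a, h a ∂μ := by
  simpa using integral_diff_le hf (integrable_zero _ _ _) hh (by simpa using hfh)

lemma int_mul_bdd {α : Type*} [MeasurableSpace α] {μ : Measure α} {c g : α → ℝ} {B : ℝ}
    (hc : Integrable c μ) (hcn : ∀ a, 0 ≤ c a) (hgm : AEStronglyMeasurable g μ)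
    (hg : ∀ a, |g a| ≤ B) : Integrable (fun a => c a * g a) μ := by
  refine Integrable.mono' (hc.const_mul |B|) (hc.aestronglyMeasurable.mul hgm) ?_
  filter_upwards with a
  rw [Real.norm_eq_abs, abs_mul, abs_of_nonneg (hcn a)]
  calc c a * |g a| ≤ c a * |B| :=
        mul_le_mul_of_nonneg_left ((hg a).trans (le_abs_self B)) (hcn a)
    _ = |B| * c a := mul_comm _ _

lemma iter_eq_prod {d : ℕ} {F : Rd d → Rd d → ℝ}
    (hF : Integrable (fun p : Rd d × Rd d => F p.1 p.2)) :
    (∫ y, ∫ z, F y z) = ∫ p : Rd d × Rd d, F p.1 p.2 := by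
  rw [MeasureTheory.Measure.volume_eq_prod] at hF ⊢
  exact MeasureTheory.integral_integral hF

lemma prod3_diff {e e' y y' z z' R PN N : ℝ} (he : |e - e'| ≤ PN)
    (he0 : 0 ≤ e) (he1 : e ≤ 1) (he0' : 0 ≤ e') (he1' : e' ≤ 1)
    (hy : 0 ≤ y) (hyR : y ≤ R) (hy' : 0 ≤ y') (hy'R : y' ≤ R)
    (hz : 0 ≤ z) (hzR : z ≤ R) (hz' : 0 ≤ z') (hz'R : z' ≤ R)
    (hN1 : |y - y'| ≤ N) (hN2 : |z - z'| ≤ N) :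
    |e * y * z - e' * y' * z'| ≤ PN * (R * R) + R * N + R * N := by
  have h1 : |(e - e') * (y * z)| ≤ PN * (R * R) :=
    abs_mul_le' he (abs_mul_le' (abs01 hy hyR) (abs01 hz hzR))
  have h2 : |e' * ((y - y') * z)| ≤ 1 * (N * R) :=
    abs_mul_le' (abs01 he0' he1') (abs_mul_le' hN1 (abs01 hz hzR))
  have h3 : |(e' * y') * (z - z')| ≤ (1 * R) * N :=
    abs_mul_le' (abs_mul_le' (abs01 he0' he1') (abs01 hy' hy'R)) hN2
  calc |e * y * z - e' * y' * z'|
      = |(e - e') * (y * z) + (e' * ((y - y') * z) + (e' * y') * (z - z'))| := by ring_nf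
    _ ≤ |(e - e') * (y * z)| + (|e' * ((y - y') * z)| + |(e' * y') * (z - z')|) :=
        (abs_add_le _ _).trans (by gcongr; exact abs_add_le _ _)
    _ ≤ PN * (R * R) + R * N + R * N := by linarith

lemma prod2_diff {e e' y y' R PN N : ℝ} (he : |e - e'| ≤ PN)
    (he0 : 0 ≤ e) (he1 : e ≤ 1) (he0' : 0 ≤ e') (he1' : e' ≤ 1)
    (hy : 0 ≤ y) (hyR : y ≤ R) (hy' : 0 ≤ y') (hy'R : y' ≤ R)
    (hN1 : |y - y'| ≤ N) :
    |e * y - e' * y'| ≤ PN * R + N := by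
  have h1 : |(e - e') * y| ≤ PN * R := abs_mul_le' he (abs01 hy hyR)
  have h2 : |e' * (y - y')| ≤ 1 * N := abs_mul_le' (abs01 he0' he1') hN1
  calc |e * y - e' * y'| = |(e - e') * y + e' * (y - y')| := by ring_nf
    _ ≤ |(e - e') * y| + |e' * (y - y')| := abs_add_le _ _
    _ ≤ PN * R + N := by linarith

lemma mul4_le {c e a b R : ℝ} (hc : 0 ≤ c) (he0 : 0 ≤ e) (he1 : e ≤ 1) (ha0 : 0 ≤ a)
    (haR : a ≤ R) (hb0 : 0 ≤ b) (hbR : b ≤ R) : c * e * a * b ≤ R * R * c := by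
  have hR : 0 ≤ R := ha0.trans haR
  calc c * e * a * b ≤ c * 1 * R * R := by
        apply mul_le_mul (mul_le_mul (mul_le_mul le_rfl he1 he0 hc) haR ha0 (by positivity)) hbR
          hb0 (by positivity)
    _ = R * R * c := by ring

lemma mul3_le {c e a R : ℝ} (hc : 0 ≤ c) (he0 : 0 ≤ e) (he1 : e ≤ 1) (ha0 : 0 ≤ a)
    (haR : a ≤ R) : c * e * a ≤ R * c := by
  calc c * e * a ≤ c * 1 * R := by
        apply mul_le_mul (mul_le_mul le_rfl he1 he0 hc) haR ha0 (by positivity)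
    _ = R * c := by ring
section B
variable {d : ℕ}

lemma phi_shift_meas {φ : Rd d → ℝ} (hφm : Measurable φ) (z : Rd d) :
    Measurable fun u => φ (z - u) :=
  hφm.comp (measurable_const.sub measurable_id)

lemma intphi_nonneg {φ : Rd d → ℝ} (hφnn : ∀ u, 0 ≤ φ u) {ρ : Rd d → ℝ}
    (hρnn : ∀ u, 0 ≤ ρ u) (z : Rd d) : 0 ≤ ∫ u, φ (z - u) * ρ u :=
  integral_nonneg fun u => mul_nonneg (hφnn _) (hρnn u)

lemma intphi_diff {φ : Rd d → ℝ} {Φ : ℝ} (hφm : Measurable φ) (hφnn : ∀ u, 0 ≤ φ u)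
    (hφi : Integrable φ) (hφv : (∫ u, φ u) = Φ)
    {ρ ψ : Rd d → ℝ} (hρm : Measurable ρ) (hψm : Measurable ψ) {N Bρ Bψ : ℝ}
    (hρb : ∀ u, |ρ u| ≤ Bρ) (hψb : ∀ u, |ψ u| ≤ Bψ)
    (hN : ∀ u, |ρ u - ψ u| ≤ N) (z : Rd d) :
    |(∫ u, φ (z - u) * ρ u) - ∫ u, φ (z - u) * ψ u| ≤ Φ * N := by
  have hsh : Integrable (fun u => φ (z - u)) := hφi.comp_sub_left z
  have hshnn : ∀ u, 0 ≤ φ (z - u) := fun u => hφnn _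
  have h1 : Integrable (fun u => φ (z - u) * ρ u) :=
    int_mul_bdd hsh hshnn hρm.aestronglyMeasurable hρb
  have h2 : Integrable (fun u => φ (z - u) * ψ u) :=
    int_mul_bdd hsh hshnn hψm.aestronglyMeasurable hψb
  have h3 : |(∫ u, φ (z - u) * ρ u) - ∫ u, φ (z - u) * ψ u| ≤ ∫ u, φ (z - u) * N := by
    refine integral_diff_le h1 h2 (hsh.mul_const N) fun u => ?_
    rw [← mul_sub, abs_mul, abs_of_nonneg (hshnn u)]
    exact mul_le_mul_of_nonneg_left (hN u) (hshnn u)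
  calc |(∫ u, φ (z - u) * ρ u) - ∫ u, φ (z - u) * ψ u| ≤ ∫ u, φ (z - u) * N := h3
    _ = (∫ u, φ (z - u)) * N := integral_mul_const _ _
    _ = Φ * N := by rw [integral_sub_left_eq_self φ volume z, hφv]

lemma expE_mem {φ : Rd d → ℝ} (hφnn : ∀ u, 0 ≤ φ u) {ρ : Rd d → ℝ}
    (hρnn : ∀ u, 0 ≤ ρ u) (z : Rd d) :
    0 ≤ Real.exp (-∫ u, φ (z - u) * ρ u) ∧ Real.exp (-∫ u, φ (z - u) * ρ u) ≤ 1 :=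
  ⟨(Real.exp_pos _).le, Real.exp_le_one_iff.2 (neg_nonpos.2 (intphi_nonneg hφnn hρnn z))⟩

lemma expE_lip {φ : Rd d → ℝ} {Φ : ℝ} (hφm : Measurable φ) (hφnn : ∀ u, 0 ≤ φ u)
    (hφi : Integrable φ) (hφv : (∫ u, φ u) = Φ)
    {ρ ψ : Rd d → ℝ} (hρm : Measurable ρ) (hψm : Measurable ψ)
    (hρnn : ∀ u, 0 ≤ ρ u) (hψnn : ∀ u, 0 ≤ ψ u) {N Bρ Bψ : ℝ}
    (hρb : ∀ u, |ρ u| ≤ Bρ) (hψb : ∀ u, |ψ u| ≤ Bψ)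
    (hN : ∀ u, |ρ u - ψ u| ≤ N) (z : Rd d) :
    |Real.exp (-∫ u, φ (z - u) * ρ u) - Real.exp (-∫ u, φ (z - u) * ψ u)| ≤ Φ * N :=
  (exp_neg_lip (intphi_nonneg hφnn hρnn z) (intphi_nonneg hφnn hψnn z)).trans
    (intphi_diff hφm hφnn hφi hφv hρm hψm hρb hψb hN z)

lemma expE_meas {φ : Rd d → ℝ} (hφm : Measurable φ) {ρ : Rd d → ℝ} (hρm : Measurable ρ) :
    Measurable fun z : Rd d => Real.exp (-∫ u, φ (z - u) * ρ u) := by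
  have hsm : StronglyMeasurable (fun p : Rd d × Rd d => φ (p.1 - p.2) * ρ p.2) :=
    ((hφm.comp (measurable_fst.sub measurable_snd)).mul (hρm.comp measurable_snd)).stronglyMeasurable
  exact Real.measurable_exp.comp (hsm.integral_prod_right'.measurable.neg)
end B
section C
variable {d : ℕ} {c₁ : Rd d → Rd d → Rd d → ℝ} {C1 C2 : ℝ} {c₂ : Rd d → Rd d → ℝ}
  {φ₁ φ₂ : Rd d → ℝ} {Φ₁ Φ₂ : ℝ}

lemma hker_nonneg (hnn : ∀ x y z, 0 ≤ c₁ x y z) (hC2 : 0 ≤ C2) {ρ : Rd d → ℝ}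
    (hρnn : ∀ y, 0 ≤ ρ y) (x : Rd d) : 0 ≤ hker c₁ C2 ρ x := by
  have h : 0 ≤ ∫ y, ∫ z, (c₁ x y z + c₁ y x z) * ρ y :=
    integral_nonneg fun y => integral_nonneg fun z =>
      mul_nonneg (add_nonneg (hnn _ _ _) (hnn _ _ _)) (hρnn y)
  simp only [hker]; linarith

lemma hker_diff (hnn : ∀ x y z, 0 ≤ c₁ x y z)
    (hi₁₃ : ∀ y, Integrable fun p : Rd d × Rd d => c₁ p.1 y p.2)
    (hi₂₃ : ∀ x, Integrable fun p : Rd d × Rd d => c₁ x p.1 p.2)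
    (hv₁₃ : ∀ y, (∫ x, ∫ z, c₁ x y z) = C1) (hv₂₃ : ∀ x, (∫ y, ∫ z, c₁ x y z) = C1)
    {ρ ψ : Rd d → ℝ} (hρm : Measurable ρ) (hψm : Measurable ψ) {N Bρ Bψ : ℝ}
    (hρb : ∀ u, |ρ u| ≤ Bρ) (hψb : ∀ u, |ψ u| ≤ Bψ) (hN : ∀ u, |ρ u - ψ u| ≤ N) (x : Rd d) :
    |hker c₁ C2 ρ x - hker c₁ C2 ψ x| ≤ C1 * N := by
  have hS : Integrable (fun p : Rd d × Rd d => c₁ x p.1 p.2 + c₁ p.1 x p.2) :=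
    (hi₂₃ x).add (hi₁₃ x)
  have hSnn : ∀ p : Rd d × Rd d, 0 ≤ c₁ x p.1 p.2 + c₁ p.1 x p.2 := fun p =>
    add_nonneg (hnn _ _ _) (hnn _ _ _)
  have hFρ : Integrable (fun p : Rd d × Rd d => (c₁ x p.1 p.2 + c₁ p.1 x p.2) * ρ p.1) :=
    int_mul_bdd hS hSnn (hρm.comp measurable_fst).aestronglyMeasurable fun p => hρb p.1
  have hFψ : Integrable (fun p : Rd d × Rd d => (c₁ x p.1 p.2 + c₁ p.1 x p.2) * ψ p.1) :=
    int_mul_bdd hS hSnn (hψm.comp measurable_fst).aestronglyMeasurable fun p => hψb p.1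
  have eρ : (∫ y, ∫ z, (c₁ x y z + c₁ y x z) * ρ y)
      = ∫ p : Rd d × Rd d, (c₁ x p.1 p.2 + c₁ p.1 x p.2) * ρ p.1 := iter_eq_prod hFρ
  have eψ : (∫ y, ∫ z, (c₁ x y z + c₁ y x z) * ψ y)
      = ∫ p : Rd d × Rd d, (c₁ x p.1 p.2 + c₁ p.1 x p.2) * ψ p.1 := iter_eq_prod hFψ
  have eS : (∫ p : Rd d × Rd d, (c₁ x p.1 p.2 + c₁ p.1 x p.2)) = C1 + C1 := by
    rw [integral_add (hi₂₃ x) (hi₁₃ x), ← iter_eq_prod (F := fun y z => c₁ x y z) (hi₂₃ x), ← iter_eq_prod (F := fun y z => c₁ y x z) (hi₁₃ x),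
      hv₂₃ x, hv₁₃ x]
  have key : |(∫ p : Rd d × Rd d, (c₁ x p.1 p.2 + c₁ p.1 x p.2) * ρ p.1)
      - ∫ p : Rd d × Rd d, (c₁ x p.1 p.2 + c₁ p.1 x p.2) * ψ p.1|
      ≤ ∫ p : Rd d × Rd d, (c₁ x p.1 p.2 + c₁ p.1 x p.2) * N := by
    refine integral_diff_le hFρ hFψ (hS.mul_const N) fun p => ?_
    rw [← mul_sub, abs_mul, abs_of_nonneg (hSnn p)]
    exact mul_le_mul_of_nonneg_left (hN p.1) (hSnn p)
  rw [integral_mul_const, eS] at key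
  have hd : hker c₁ C2 ρ x - hker c₁ C2 ψ x
      = 1/2 * ((∫ p : Rd d × Rd d, (c₁ x p.1 p.2 + c₁ p.1 x p.2) * ρ p.1)
        - ∫ p : Rd d × Rd d, (c₁ x p.1 p.2 + c₁ p.1 x p.2) * ψ p.1) := by
    simp only [hker]; rw [eρ, eψ]; ring
  rw [hd, abs_mul]
  have : |(1:ℝ)/2| = 1/2 := by norm_num
  rw [this]
  linarith [abs_nonneg ((∫ p : Rd d × Rd d, (c₁ x p.1 p.2 + c₁ p.1 x p.2) * ρ p.1)
    - ∫ p : Rd d × Rd d, (c₁ x p.1 p.2 + c₁ p.1 x p.2) * ψ p.1)]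
end C
section D
variable {d : ℕ} {c₁ : Rd d → Rd d → Rd d → ℝ} {C1 C2 : ℝ} {c₂ : Rd d → Rd d → ℝ}
  {φ₁ φ₂ : Rd d → ℝ} {Φ₁ Φ₂ : ℝ}

lemma mul3_le' {e a b R : ℝ} (he0 : 0 ≤ e) (he1 : e ≤ 1) (ha0 : 0 ≤ a) (haR : a ≤ R)
    (hb0 : 0 ≤ b) (hbR : b ≤ R) : e * a * b ≤ R * R := by
  have hR : 0 ≤ R := ha0.trans haR
  calc e * a * b ≤ 1 * R * R :=
        mul_le_mul (mul_le_mul he1 haR ha0 zero_le_one) hbR hb0 (by positivity)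
    _ = R * R := by ring

lemma mul2_le' {e a R : ℝ} (he0 : 0 ≤ e) (he1 : e ≤ 1) (ha0 : 0 ≤ a) (haR : a ≤ R) :
    e * a ≤ R := by
  calc e * a ≤ 1 * R := mul_le_mul he1 haR ha0 zero_le_one
    _ = R := one_mul R

lemma R2_bound
    (hc₁nn : ∀ x y z, 0 ≤ c₁ x y z)
    (hi₁₂ : ∀ z, Integrable fun p : Rd d × Rd d => c₁ p.1 p.2 z)
    (hi₁₃ : ∀ y, Integrable fun p : Rd d × Rd d => c₁ p.1 y p.2)
    (hi₂₃ : ∀ x, Integrable fun p : Rd d × Rd d => c₁ x p.1 p.2)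
    (hv₁₂ : ∀ z, (∫ x, ∫ y, c₁ x y z) = C1)
    (hv₁₃ : ∀ y, (∫ x, ∫ z, c₁ x y z) = C1)
    (hv₂₃ : ∀ x, (∫ y, ∫ z, c₁ x y z) = C1)
    (hc₂nn : ∀ x y, 0 ≤ c₂ x y)
    (hc₂int₁ : ∀ y, Integrable fun x => c₂ x y) (hc₂int₂ : ∀ x, Integrable fun y => c₂ x y)
    (hc₂val₁ : ∀ y, (∫ x, c₂ x y) = C2) (hc₂val₂ : ∀ x, (∫ y, c₂ x y) = C2)
    (hφ₁m : Measurable φ₁) (hφ₁nn : ∀ u, 0 ≤ φ₁ u)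
    (hφ₂m : Measurable φ₂) (hφ₂nn : ∀ u, 0 ≤ φ₂ u)
    {ρ : Rd d → ℝ} (hρm : Measurable ρ) (hρnn : ∀ y, 0 ≤ ρ y) {R : ℝ}
    (hρb : ∀ y, ρ y ≤ R) (x : Rd d) :
    |R2 c₁ c₂ φ₁ φ₂ ρ x| ≤ 3/2 * C1 * (R * R) + 2 * (C2 * R) := by
  have hR : 0 ≤ R := (hρnn 0).trans (hρb 0)
  have hρb' : ∀ y, |ρ y| ≤ R := fun y => abs01 (hρnn y) (hρb y)
  -- exponential factors
  have hE1 : ∀ z, 0 ≤ Real.exp (-∫ u, φ₁ (z - u) * ρ u) ∧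
      Real.exp (-∫ u, φ₁ (z - u) * ρ u) ≤ 1 := fun z => expE_mem hφ₁nn hρnn z
  have hE2 : ∀ z, 0 ≤ Real.exp (-∫ u, φ₂ (z - u) * ρ u) ∧
      Real.exp (-∫ u, φ₂ (z - u) * ρ u) ≤ 1 := fun z => expE_mem hφ₂nn hρnn z
  -- Term 1
  have hg1m : Measurable fun p : Rd d × Rd d =>
      Real.exp (-∫ u, φ₁ (x - u) * ρ u) * ρ p.1 * ρ p.2 :=
    ((measurable_const.mul (hρm.comp measurable_fst)).mul (hρm.comp measurable_snd))
  have hg1b : ∀ p : Rd d × Rd d,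
      |Real.exp (-∫ u, φ₁ (x - u) * ρ u) * ρ p.1 * ρ p.2| ≤ R * R := fun p =>
    abs01 (mul_nonneg (mul_nonneg (hE1 x).1 (hρnn p.1)) (hρnn p.2))
      (mul3_le' (hE1 x).1 (hE1 x).2 (hρnn p.1) (hρb p.1) (hρnn p.2) (hρb p.2))
  have hF1 : Integrable (fun p : Rd d × Rd d =>
      c₁ p.1 p.2 x * Real.exp (-∫ u, φ₁ (x - u) * ρ u) * ρ p.1 * ρ p.2) :=
    (int_mul_bdd (hi₁₂ x) (fun p => hc₁nn _ _ _) hg1m.aestronglyMeasurable hg1b).congr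
      (ae_of_all _ fun p => by ring)
  have e1 : (∫ y, ∫ z, c₁ y z x * Real.exp (-∫ u, φ₁ (x - u) * ρ u) * ρ y * ρ z)
      = ∫ p : Rd d × Rd d, c₁ p.1 p.2 x * Real.exp (-∫ u, φ₁ (x - u) * ρ u) * ρ p.1 * ρ p.2 :=
    iter_eq_prod (F := fun y z => c₁ y z x * Real.exp (-∫ u, φ₁ (x - u) * ρ u) * ρ y * ρ z) hF1
  have eC1 : (∫ p : Rd d × Rd d, c₁ p.1 p.2 x) = C1 := by
    rw [← iter_eq_prod (F := fun y z => c₁ y z x) (hi₁₂ x)]; exact hv₁₂ x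
  have bP1 : |∫ p : Rd d × Rd d,
      c₁ p.1 p.2 x * Real.exp (-∫ u, φ₁ (x - u) * ρ u) * ρ p.1 * ρ p.2| ≤ R * R * C1 := by
    have := abs_integral_le_of_le hF1 ((hi₁₂ x).const_mul (R * R)) (fun p => by
      rw [abs_of_nonneg (mul_nonneg (mul_nonneg (mul_nonneg (hc₁nn _ _ _) (hE1 x).1)
        (hρnn p.1)) (hρnn p.2))]
      exact mul4_le (hc₁nn _ _ _) (hE1 x).1 (hE1 x).2 (hρnn p.1) (hρb p.1) (hρnn p.2) (hρb p.2))
    rwa [integral_const_mul, eC1] at this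
  -- Term 2
  have hS : Integrable (fun p : Rd d × Rd d => c₁ x p.1 p.2 + c₁ p.1 x p.2) :=
    (hi₂₃ x).add (hi₁₃ x)
  have hSnn : ∀ p : Rd d × Rd d, 0 ≤ c₁ x p.1 p.2 + c₁ p.1 x p.2 := fun p =>
    add_nonneg (hc₁nn _ _ _) (hc₁nn _ _ _)
  have eS : (∫ p : Rd d × Rd d, (c₁ x p.1 p.2 + c₁ p.1 x p.2)) = C1 + C1 := by
    rw [integral_add (hi₂₃ x) (hi₁₃ x), ← iter_eq_prod (F := fun y z => c₁ x y z) (hi₂₃ x),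
      ← iter_eq_prod (F := fun y z => c₁ y x z) (hi₁₃ x), hv₂₃ x, hv₁₃ x]
  have hg2m : Measurable fun p : Rd d × Rd d =>
      (1 - Real.exp (-∫ u, φ₁ (p.2 - u) * ρ u)) * ρ x * ρ p.1 :=
    ((measurable_const.sub ((expE_meas hφ₁m hρm).comp measurable_snd)).mul
      measurable_const).mul (hρm.comp measurable_fst)
  have hg2b : ∀ p : Rd d × Rd d,
      |(1 - Real.exp (-∫ u, φ₁ (p.2 - u) * ρ u)) * ρ x * ρ p.1| ≤ R * R := fun p =>
    abs01 (mul_nonneg (mul_nonneg (by linarith [(hE1 p.2).2]) (hρnn x)) (hρnn p.1))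
      (mul3_le' (by linarith [(hE1 p.2).2]) (by linarith [(hE1 p.2).1]) (hρnn x) (hρb x)
        (hρnn p.1) (hρb p.1))
  have hF2 : Integrable (fun p : Rd d × Rd d => (c₁ x p.1 p.2 + c₁ p.1 x p.2) *
      (1 - Real.exp (-∫ u, φ₁ (p.2 - u) * ρ u)) * ρ x * ρ p.1) :=
    (int_mul_bdd hS hSnn hg2m.aestronglyMeasurable hg2b).congr (ae_of_all _ fun p => by ring)
  have e2 : (∫ y, ∫ z, (c₁ x y z + c₁ y x z) *
        (1 - Real.exp (-∫ u, φ₁ (z - u) * ρ u)) * ρ x * ρ y)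
      = ∫ p : Rd d × Rd d, (c₁ x p.1 p.2 + c₁ p.1 x p.2) *
        (1 - Real.exp (-∫ u, φ₁ (p.2 - u) * ρ u)) * ρ x * ρ p.1 :=
    iter_eq_prod (F := fun y z => (c₁ x y z + c₁ y x z) *
      (1 - Real.exp (-∫ u, φ₁ (z - u) * ρ u)) * ρ x * ρ y) hF2
  have bP2 : |∫ p : Rd d × Rd d, (c₁ x p.1 p.2 + c₁ p.1 x p.2) *
      (1 - Real.exp (-∫ u, φ₁ (p.2 - u) * ρ u)) * ρ x * ρ p.1| ≤ R * R * (C1 + C1) := by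
    have := abs_integral_le_of_le hF2 (hS.const_mul (R * R)) (fun p => by
      rw [abs_of_nonneg (mul_nonneg (mul_nonneg (mul_nonneg (hSnn p)
        (by linarith [(hE1 p.2).2])) (hρnn x)) (hρnn p.1))]
      exact mul4_le (hSnn p) (by linarith [(hE1 p.2).2]) (by linarith [(hE1 p.2).1]) (hρnn x)
        (hρb x) (hρnn p.1) (hρb p.1))
    rwa [integral_const_mul, eS] at this
  -- Term 3
  have hg3m : Measurable fun y : Rd d => Real.exp (-∫ u, φ₂ (x - u) * ρ u) * ρ y :=
    measurable_const.mul hρm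
  have hg3b : ∀ y : Rd d, |Real.exp (-∫ u, φ₂ (x - u) * ρ u) * ρ y| ≤ R := fun y =>
    abs01 (mul_nonneg (hE2 x).1 (hρnn y)) (mul2_le' (hE2 x).1 (hE2 x).2 (hρnn y) (hρb y))
  have hI3 : Integrable (fun y => c₂ y x * Real.exp (-∫ u, φ₂ (x - u) * ρ u) * ρ y) :=
    (int_mul_bdd (hc₂int₁ x) (fun y => hc₂nn y x) hg3m.aestronglyMeasurable hg3b).congr
      (ae_of_all _ fun y => by ring)
  have bI3 : |∫ y, c₂ y x * Real.exp (-∫ u, φ₂ (x - u) * ρ u) * ρ y| ≤ R * C2 := by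
    have := abs_integral_le_of_le hI3 ((hc₂int₁ x).const_mul R) (fun y => by
      rw [abs_of_nonneg (mul_nonneg (mul_nonneg (hc₂nn y x) (hE2 x).1) (hρnn y))]
      exact mul3_le (hc₂nn y x) (hE2 x).1 (hE2 x).2 (hρnn y) (hρb y))
    rwa [integral_const_mul, hc₂val₁ x] at this
  -- Term 4
  have hg4m : Measurable fun y : Rd d => (1 - Real.exp (-∫ u, φ₂ (y - u) * ρ u)) * ρ x :=
    (measurable_const.sub (expE_meas hφ₂m hρm)).mul measurable_const
  have hg4b : ∀ y : Rd d, |(1 - Real.exp (-∫ u, φ₂ (y - u) * ρ u)) * ρ x| ≤ R := fun y =>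
    abs01 (mul_nonneg (by linarith [(hE2 y).2]) (hρnn x))
      (mul2_le' (by linarith [(hE2 y).2]) (by linarith [(hE2 y).1]) (hρnn x) (hρb x))
  have hI4 : Integrable (fun y => c₂ x y * (1 - Real.exp (-∫ u, φ₂ (y - u) * ρ u)) * ρ x) :=
    (int_mul_bdd (hc₂int₂ x) (fun y => hc₂nn x y) hg4m.aestronglyMeasurable hg4b).congr
      (ae_of_all _ fun y => by ring)
  have bI4 : |∫ y, c₂ x y * (1 - Real.exp (-∫ u, φ₂ (y - u) * ρ u)) * ρ x| ≤ R * C2 := by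
    have := abs_integral_le_of_le hI4 ((hc₂int₂ x).const_mul R) (fun y => by
      rw [abs_of_nonneg (mul_nonneg (mul_nonneg (hc₂nn x y) (by linarith [(hE2 y).2])) (hρnn x))]
      exact mul3_le (hc₂nn x y) (by linarith [(hE2 y).2]) (by linarith [(hE2 y).1]) (hρnn x)
        (hρb x))
    rwa [integral_const_mul, hc₂val₂ x] at this
  -- assemble
  simp only [R2]
  rw [e1, e2]
  set P1 := ∫ p : Rd d × Rd d,
    c₁ p.1 p.2 x * Real.exp (-∫ u, φ₁ (x - u) * ρ u) * ρ p.1 * ρ p.2 with hP1def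
  set P2 := ∫ p : Rd d × Rd d, (c₁ x p.1 p.2 + c₁ p.1 x p.2) *
    (1 - Real.exp (-∫ u, φ₁ (p.2 - u) * ρ u)) * ρ x * ρ p.1 with hP2def
  set I3 := ∫ y, c₂ y x * Real.exp (-∫ u, φ₂ (x - u) * ρ u) * ρ y with hI3def
  set I4 := ∫ y, c₂ x y * (1 - Real.exp (-∫ u, φ₂ (y - u) * ρ u)) * ρ x with hI4def
  have habs : |1/2 * P1 + 1/2 * P2 + I3 + I4| ≤ 1/2 * |P1| + 1/2 * |P2| + |I3| + |I4| := by
    calc |1/2 * P1 + 1/2 * P2 + I3 + I4| ≤ |1/2 * P1 + 1/2 * P2 + I3| + |I4| := abs_add_le _ _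
      _ ≤ (|1/2 * P1 + 1/2 * P2| + |I3|) + |I4| := add_le_add_left (abs_add_le _ _) _
      _ ≤ ((|1/2 * P1| + |1/2 * P2|) + |I3|) + |I4| :=
          add_le_add_left (add_le_add_left (abs_add_le _ _) _) _
      _ = 1/2 * |P1| + 1/2 * |P2| + |I3| + |I4| := by
          rw [abs_mul, abs_mul, abs_of_nonneg (by norm_num : (0:ℝ) ≤ 1/2)]
  refine habs.trans ?_
  linarith
end D
section E
variable {d : ℕ} {c₁ : Rd d → Rd d → Rd d → ℝ} {C1 C2 : ℝ} {c₂ : Rd d → Rd d → ℝ}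
  {φ₁ φ₂ : Rd d → ℝ} {Φ₁ Φ₂ : ℝ}

lemma R2_diff
    (hc₁nn : ∀ x y z, 0 ≤ c₁ x y z)
    (hi₁₂ : ∀ z, Integrable fun p : Rd d × Rd d => c₁ p.1 p.2 z)
    (hi₁₃ : ∀ y, Integrable fun p : Rd d × Rd d => c₁ p.1 y p.2)
    (hi₂₃ : ∀ x, Integrable fun p : Rd d × Rd d => c₁ x p.1 p.2)
    (hv₁₂ : ∀ z, (∫ x, ∫ y, c₁ x y z) = C1)
    (hv₁₃ : ∀ y, (∫ x, ∫ z, c₁ x y z) = C1)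
    (hv₂₃ : ∀ x, (∫ y, ∫ z, c₁ x y z) = C1)
    (hc₂nn : ∀ x y, 0 ≤ c₂ x y)
    (hc₂int₁ : ∀ y, Integrable fun x => c₂ x y) (hc₂int₂ : ∀ x, Integrable fun y => c₂ x y)
    (hc₂val₁ : ∀ y, (∫ x, c₂ x y) = C2) (hc₂val₂ : ∀ x, (∫ y, c₂ x y) = C2)
    (hφ₁m : Measurable φ₁) (hφ₁nn : ∀ u, 0 ≤ φ₁ u) (hφ₁i : Integrable φ₁)
    (hφ₁v : (∫ u, φ₁ u) = Φ₁)
    (hφ₂m : Measurable φ₂) (hφ₂nn : ∀ u, 0 ≤ φ₂ u) (hφ₂i : Integrable φ₂)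
    (hφ₂v : (∫ u, φ₂ u) = Φ₂)
    {ρ ψ : Rd d → ℝ} (hρm : Measurable ρ) (hψm : Measurable ψ)
    (hρnn : ∀ y, 0 ≤ ρ y) (hψnn : ∀ y, 0 ≤ ψ y) {R N : ℝ}
    (hρb : ∀ y, ρ y ≤ R) (hψb : ∀ y, ψ y ≤ R) (hN : ∀ y, |ρ y - ψ y| ≤ N) (x : Rd d) :
    |R2 c₁ c₂ φ₁ φ₂ ρ x - R2 c₁ c₂ φ₁ φ₂ ψ x|
      ≤ (3/2 * C1 * (Φ₁ * (R * R) + 2 * R) + 2 * C2 * (Φ₂ * R + 1)) * N := by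
  have hR : 0 ≤ R := (hρnn 0).trans (hρb 0)
  have hρb' : ∀ y, |ρ y| ≤ R := fun y => abs01 (hρnn y) (hρb y)
  have hψb' : ∀ y, |ψ y| ≤ R := fun y => abs01 (hψnn y) (hψb y)
  have hE1ρ : ∀ z, 0 ≤ Real.exp (-∫ u, φ₁ (z - u) * ρ u) ∧
      Real.exp (-∫ u, φ₁ (z - u) * ρ u) ≤ 1 := fun z => expE_mem hφ₁nn hρnn z
  have hE1ψ : ∀ z, 0 ≤ Real.exp (-∫ u, φ₁ (z - u) * ψ u) ∧
      Real.exp (-∫ u, φ₁ (z - u) * ψ u) ≤ 1 := fun z => expE_mem hφ₁nn hψnn z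
  have hE2ρ : ∀ z, 0 ≤ Real.exp (-∫ u, φ₂ (z - u) * ρ u) ∧
      Real.exp (-∫ u, φ₂ (z - u) * ρ u) ≤ 1 := fun z => expE_mem hφ₂nn hρnn z
  have hE2ψ : ∀ z, 0 ≤ Real.exp (-∫ u, φ₂ (z - u) * ψ u) ∧
      Real.exp (-∫ u, φ₂ (z - u) * ψ u) ≤ 1 := fun z => expE_mem hφ₂nn hψnn z
  have hE1d : ∀ z : Rd d, |Real.exp (-∫ u, φ₁ (z - u) * ρ u)
      - Real.exp (-∫ u, φ₁ (z - u) * ψ u)| ≤ Φ₁ * N := fun z =>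
    expE_lip hφ₁m hφ₁nn hφ₁i hφ₁v hρm hψm hρnn hψnn hρb' hψb' hN z
  have hE2d : ∀ z : Rd d, |Real.exp (-∫ u, φ₂ (z - u) * ρ u)
      - Real.exp (-∫ u, φ₂ (z - u) * ψ u)| ≤ Φ₂ * N := fun z =>
    expE_lip hφ₂m hφ₂nn hφ₂i hφ₂v hρm hψm hρnn hψnn hρb' hψb' hN z
  -- integrability (from R2_bound-style arguments)
  have hg1mρ : Measurable fun p : Rd d × Rd d =>
      Real.exp (-∫ u, φ₁ (x - u) * ρ u) * ρ p.1 * ρ p.2 :=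
    (measurable_const.mul (hρm.comp measurable_fst)).mul (hρm.comp measurable_snd)
  have hg1mψ : Measurable fun p : Rd d × Rd d =>
      Real.exp (-∫ u, φ₁ (x - u) * ψ u) * ψ p.1 * ψ p.2 :=
    (measurable_const.mul (hψm.comp measurable_fst)).mul (hψm.comp measurable_snd)
  have hg1bρ : ∀ p : Rd d × Rd d,
      |Real.exp (-∫ u, φ₁ (x - u) * ρ u) * ρ p.1 * ρ p.2| ≤ R * R := fun p =>
    abs01 (mul_nonneg (mul_nonneg (hE1ρ x).1 (hρnn p.1)) (hρnn p.2))
      (mul3_le' (hE1ρ x).1 (hE1ρ x).2 (hρnn p.1) (hρb p.1) (hρnn p.2) (hρb p.2))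
  have hg1bψ : ∀ p : Rd d × Rd d,
      |Real.exp (-∫ u, φ₁ (x - u) * ψ u) * ψ p.1 * ψ p.2| ≤ R * R := fun p =>
    abs01 (mul_nonneg (mul_nonneg (hE1ψ x).1 (hψnn p.1)) (hψnn p.2))
      (mul3_le' (hE1ψ x).1 (hE1ψ x).2 (hψnn p.1) (hψb p.1) (hψnn p.2) (hψb p.2))
  have hF1ρ : Integrable (fun p : Rd d × Rd d =>
      c₁ p.1 p.2 x * Real.exp (-∫ u, φ₁ (x - u) * ρ u) * ρ p.1 * ρ p.2) :=
    (int_mul_bdd (hi₁₂ x) (fun p => hc₁nn _ _ _) hg1mρ.aestronglyMeasurable hg1bρ).congr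
      (ae_of_all _ fun p => by ring)
  have hF1ψ : Integrable (fun p : Rd d × Rd d =>
      c₁ p.1 p.2 x * Real.exp (-∫ u, φ₁ (x - u) * ψ u) * ψ p.1 * ψ p.2) :=
    (int_mul_bdd (hi₁₂ x) (fun p => hc₁nn _ _ _) hg1mψ.aestronglyMeasurable hg1bψ).congr
      (ae_of_all _ fun p => by ring)
  have e1ρ : (∫ y, ∫ z, c₁ y z x * Real.exp (-∫ u, φ₁ (x - u) * ρ u) * ρ y * ρ z)
      = ∫ p : Rd d × Rd d, c₁ p.1 p.2 x * Real.exp (-∫ u, φ₁ (x - u) * ρ u) * ρ p.1 * ρ p.2 :=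
    iter_eq_prod (F := fun y z => c₁ y z x * Real.exp (-∫ u, φ₁ (x - u) * ρ u) * ρ y * ρ z) hF1ρ
  have e1ψ : (∫ y, ∫ z, c₁ y z x * Real.exp (-∫ u, φ₁ (x - u) * ψ u) * ψ y * ψ z)
      = ∫ p : Rd d × Rd d, c₁ p.1 p.2 x * Real.exp (-∫ u, φ₁ (x - u) * ψ u) * ψ p.1 * ψ p.2 :=
    iter_eq_prod (F := fun y z => c₁ y z x * Real.exp (-∫ u, φ₁ (x - u) * ψ u) * ψ y * ψ z) hF1ψ
  have eC1 : (∫ p : Rd d × Rd d, c₁ p.1 p.2 x) = C1 := by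
    rw [← iter_eq_prod (F := fun y z => c₁ y z x) (hi₁₂ x)]; exact hv₁₂ x
  have hS : Integrable (fun p : Rd d × Rd d => c₁ x p.1 p.2 + c₁ p.1 x p.2) :=
    (hi₂₃ x).add (hi₁₃ x)
  have hSnn : ∀ p : Rd d × Rd d, 0 ≤ c₁ x p.1 p.2 + c₁ p.1 x p.2 := fun p =>
    add_nonneg (hc₁nn _ _ _) (hc₁nn _ _ _)
  have eS : (∫ p : Rd d × Rd d, (c₁ x p.1 p.2 + c₁ p.1 x p.2)) = C1 + C1 := by
    rw [integral_add (hi₂₃ x) (hi₁₃ x), ← iter_eq_prod (F := fun y z => c₁ x y z) (hi₂₃ x),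
      ← iter_eq_prod (F := fun y z => c₁ y x z) (hi₁₃ x), hv₂₃ x, hv₁₃ x]
  have hg2mρ : Measurable fun p : Rd d × Rd d =>
      (1 - Real.exp (-∫ u, φ₁ (p.2 - u) * ρ u)) * ρ x * ρ p.1 :=
    ((measurable_const.sub ((expE_meas hφ₁m hρm).comp measurable_snd)).mul
      measurable_const).mul (hρm.comp measurable_fst)
  have hg2mψ : Measurable fun p : Rd d × Rd d =>
      (1 - Real.exp (-∫ u, φ₁ (p.2 - u) * ψ u)) * ψ x * ψ p.1 :=
    ((measurable_const.sub ((expE_meas hφ₁m hψm).comp measurable_snd)).mul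
      measurable_const).mul (hψm.comp measurable_fst)
  have hg2bρ : ∀ p : Rd d × Rd d,
      |(1 - Real.exp (-∫ u, φ₁ (p.2 - u) * ρ u)) * ρ x * ρ p.1| ≤ R * R := fun p =>
    abs01 (mul_nonneg (mul_nonneg (by linarith [(hE1ρ p.2).2]) (hρnn x)) (hρnn p.1))
      (mul3_le' (by linarith [(hE1ρ p.2).2]) (by linarith [(hE1ρ p.2).1]) (hρnn x) (hρb x)
        (hρnn p.1) (hρb p.1))
  have hg2bψ : ∀ p : Rd d × Rd d,
      |(1 - Real.exp (-∫ u, φ₁ (p.2 - u) * ψ u)) * ψ x * ψ p.1| ≤ R * R := fun p =>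
    abs01 (mul_nonneg (mul_nonneg (by linarith [(hE1ψ p.2).2]) (hψnn x)) (hψnn p.1))
      (mul3_le' (by linarith [(hE1ψ p.2).2]) (by linarith [(hE1ψ p.2).1]) (hψnn x) (hψb x)
        (hψnn p.1) (hψb p.1))
  have hF2ρ : Integrable (fun p : Rd d × Rd d => (c₁ x p.1 p.2 + c₁ p.1 x p.2) *
      (1 - Real.exp (-∫ u, φ₁ (p.2 - u) * ρ u)) * ρ x * ρ p.1) :=
    (int_mul_bdd hS hSnn hg2mρ.aestronglyMeasurable hg2bρ).congr (ae_of_all _ fun p => by ring)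
  have hF2ψ : Integrable (fun p : Rd d × Rd d => (c₁ x p.1 p.2 + c₁ p.1 x p.2) *
      (1 - Real.exp (-∫ u, φ₁ (p.2 - u) * ψ u)) * ψ x * ψ p.1) :=
    (int_mul_bdd hS hSnn hg2mψ.aestronglyMeasurable hg2bψ).congr (ae_of_all _ fun p => by ring)
  have e2ρ : (∫ y, ∫ z, (c₁ x y z + c₁ y x z) *
        (1 - Real.exp (-∫ u, φ₁ (z - u) * ρ u)) * ρ x * ρ y)
      = ∫ p : Rd d × Rd d, (c₁ x p.1 p.2 + c₁ p.1 x p.2) *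
        (1 - Real.exp (-∫ u, φ₁ (p.2 - u) * ρ u)) * ρ x * ρ p.1 :=
    iter_eq_prod (F := fun y z => (c₁ x y z + c₁ y x z) *
      (1 - Real.exp (-∫ u, φ₁ (z - u) * ρ u)) * ρ x * ρ y) hF2ρ
  have e2ψ : (∫ y, ∫ z, (c₁ x y z + c₁ y x z) *
        (1 - Real.exp (-∫ u, φ₁ (z - u) * ψ u)) * ψ x * ψ y)
      = ∫ p : Rd d × Rd d, (c₁ x p.1 p.2 + c₁ p.1 x p.2) *
        (1 - Real.exp (-∫ u, φ₁ (p.2 - u) * ψ u)) * ψ x * ψ p.1 :=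
    iter_eq_prod (F := fun y z => (c₁ x y z + c₁ y x z) *
      (1 - Real.exp (-∫ u, φ₁ (z - u) * ψ u)) * ψ x * ψ y) hF2ψ
  have hg3mρ : Measurable fun y : Rd d => Real.exp (-∫ u, φ₂ (x - u) * ρ u) * ρ y :=
    measurable_const.mul hρm
  have hg3mψ : Measurable fun y : Rd d => Real.exp (-∫ u, φ₂ (x - u) * ψ u) * ψ y :=
    measurable_const.mul hψm
  have hg3bρ : ∀ y : Rd d, |Real.exp (-∫ u, φ₂ (x - u) * ρ u) * ρ y| ≤ R := fun y =>
    abs01 (mul_nonneg (hE2ρ x).1 (hρnn y)) (mul2_le' (hE2ρ x).1 (hE2ρ x).2 (hρnn y) (hρb y))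
  have hg3bψ : ∀ y : Rd d, |Real.exp (-∫ u, φ₂ (x - u) * ψ u) * ψ y| ≤ R := fun y =>
    abs01 (mul_nonneg (hE2ψ x).1 (hψnn y)) (mul2_le' (hE2ψ x).1 (hE2ψ x).2 (hψnn y) (hψb y))
  have hI3ρ : Integrable (fun y => c₂ y x * Real.exp (-∫ u, φ₂ (x - u) * ρ u) * ρ y) :=
    (int_mul_bdd (hc₂int₁ x) (fun y => hc₂nn y x) hg3mρ.aestronglyMeasurable hg3bρ).congr
      (ae_of_all _ fun y => by ring)
  have hI3ψ : Integrable (fun y => c₂ y x * Real.exp (-∫ u, φ₂ (x - u) * ψ u) * ψ y) :=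
    (int_mul_bdd (hc₂int₁ x) (fun y => hc₂nn y x) hg3mψ.aestronglyMeasurable hg3bψ).congr
      (ae_of_all _ fun y => by ring)
  have hg4mρ : Measurable fun y : Rd d => (1 - Real.exp (-∫ u, φ₂ (y - u) * ρ u)) * ρ x :=
    (measurable_const.sub (expE_meas hφ₂m hρm)).mul measurable_const
  have hg4mψ : Measurable fun y : Rd d => (1 - Real.exp (-∫ u, φ₂ (y - u) * ψ u)) * ψ x :=
    (measurable_const.sub (expE_meas hφ₂m hψm)).mul measurable_const
  have hg4bρ : ∀ y : Rd d, |(1 - Real.exp (-∫ u, φ₂ (y - u) * ρ u)) * ρ x| ≤ R := fun y =>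
    abs01 (mul_nonneg (by linarith [(hE2ρ y).2]) (hρnn x))
      (mul2_le' (by linarith [(hE2ρ y).2]) (by linarith [(hE2ρ y).1]) (hρnn x) (hρb x))
  have hg4bψ : ∀ y : Rd d, |(1 - Real.exp (-∫ u, φ₂ (y - u) * ψ u)) * ψ x| ≤ R := fun y =>
    abs01 (mul_nonneg (by linarith [(hE2ψ y).2]) (hψnn x))
      (mul2_le' (by linarith [(hE2ψ y).2]) (by linarith [(hE2ψ y).1]) (hψnn x) (hψb x))
  have hI4ρ : Integrable (fun y => c₂ x y * (1 - Real.exp (-∫ u, φ₂ (y - u) * ρ u)) * ρ x) :=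
    (int_mul_bdd (hc₂int₂ x) (fun y => hc₂nn x y) hg4mρ.aestronglyMeasurable hg4bρ).congr
      (ae_of_all _ fun y => by ring)
  have hI4ψ : Integrable (fun y => c₂ x y * (1 - Real.exp (-∫ u, φ₂ (y - u) * ψ u)) * ψ x) :=
    (int_mul_bdd (hc₂int₂ x) (fun y => hc₂nn x y) hg4mψ.aestronglyMeasurable hg4bψ).congr
      (ae_of_all _ fun y => by ring)
  -- difference bounds
  have bD1 : |(∫ p : Rd d × Rd d,
        c₁ p.1 p.2 x * Real.exp (-∫ u, φ₁ (x - u) * ρ u) * ρ p.1 * ρ p.2)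
      - ∫ p : Rd d × Rd d, c₁ p.1 p.2 x * Real.exp (-∫ u, φ₁ (x - u) * ψ u) * ψ p.1 * ψ p.2|
      ≤ C1 * (Φ₁ * N * (R * R) + R * N + R * N) := by
    have := integral_diff_le hF1ρ hF1ψ
      ((hi₁₂ x).mul_const (Φ₁ * N * (R * R) + R * N + R * N)) (fun p => by
        have hfac : c₁ p.1 p.2 x * Real.exp (-∫ u, φ₁ (x - u) * ρ u) * ρ p.1 * ρ p.2
            - c₁ p.1 p.2 x * Real.exp (-∫ u, φ₁ (x - u) * ψ u) * ψ p.1 * ψ p.2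
            = c₁ p.1 p.2 x * (Real.exp (-∫ u, φ₁ (x - u) * ρ u) * ρ p.1 * ρ p.2
              - Real.exp (-∫ u, φ₁ (x - u) * ψ u) * ψ p.1 * ψ p.2) := by ring
        rw [hfac, abs_mul, abs_of_nonneg (hc₁nn _ _ _)]
        exact mul_le_mul_of_nonneg_left (prod3_diff (hE1d x) (hE1ρ x).1 (hE1ρ x).2
          (hE1ψ x).1 (hE1ψ x).2 (hρnn p.1) (hρb p.1) (hψnn p.1) (hψb p.1)
          (hρnn p.2) (hρb p.2) (hψnn p.2) (hψb p.2) (hN p.1) (hN p.2)) (hc₁nn _ _ _))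
    rwa [integral_mul_const, eC1] at this
  have bD2 : |(∫ p : Rd d × Rd d, (c₁ x p.1 p.2 + c₁ p.1 x p.2) *
        (1 - Real.exp (-∫ u, φ₁ (p.2 - u) * ρ u)) * ρ x * ρ p.1)
      - ∫ p : Rd d × Rd d, (c₁ x p.1 p.2 + c₁ p.1 x p.2) *
        (1 - Real.exp (-∫ u, φ₁ (p.2 - u) * ψ u)) * ψ x * ψ p.1|
      ≤ (C1 + C1) * (Φ₁ * N * (R * R) + R * N + R * N) := by
    have := integral_diff_le hF2ρ hF2ψ
      (hS.mul_const (Φ₁ * N * (R * R) + R * N + R * N)) (fun p => by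
        have hfac : (c₁ x p.1 p.2 + c₁ p.1 x p.2) *
            (1 - Real.exp (-∫ u, φ₁ (p.2 - u) * ρ u)) * ρ x * ρ p.1
            - (c₁ x p.1 p.2 + c₁ p.1 x p.2) *
            (1 - Real.exp (-∫ u, φ₁ (p.2 - u) * ψ u)) * ψ x * ψ p.1
            = (c₁ x p.1 p.2 + c₁ p.1 x p.2) *
              ((1 - Real.exp (-∫ u, φ₁ (p.2 - u) * ρ u)) * ρ x * ρ p.1
              - (1 - Real.exp (-∫ u, φ₁ (p.2 - u) * ψ u)) * ψ x * ψ p.1) := by ring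
        have hed : |(1 - Real.exp (-∫ u, φ₁ (p.2 - u) * ρ u))
            - (1 - Real.exp (-∫ u, φ₁ (p.2 - u) * ψ u))| ≤ Φ₁ * N := by
          have := hE1d p.2
          calc |(1 - Real.exp (-∫ u, φ₁ (p.2 - u) * ρ u))
              - (1 - Real.exp (-∫ u, φ₁ (p.2 - u) * ψ u))|
              = |Real.exp (-∫ u, φ₁ (p.2 - u) * ρ u)
                - Real.exp (-∫ u, φ₁ (p.2 - u) * ψ u)| := by
                  rw [show (1 - Real.exp (-∫ u, φ₁ (p.2 - u) * ρ u))
                    - (1 - Real.exp (-∫ u, φ₁ (p.2 - u) * ψ u))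
                    = -(Real.exp (-∫ u, φ₁ (p.2 - u) * ρ u)
                      - Real.exp (-∫ u, φ₁ (p.2 - u) * ψ u)) from by ring, abs_neg]
            _ ≤ Φ₁ * N := hE1d p.2
        rw [hfac, abs_mul, abs_of_nonneg (hSnn p)]
        exact mul_le_mul_of_nonneg_left (prod3_diff hed
          (by linarith [(hE1ρ p.2).2]) (by linarith [(hE1ρ p.2).1])
          (by linarith [(hE1ψ p.2).2]) (by linarith [(hE1ψ p.2).1])
          (hρnn x) (hρb x) (hψnn x) (hψb x) (hρnn p.1) (hρb p.1) (hψnn p.1) (hψb p.1)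
          (hN x) (hN p.1)) (hSnn p))
    rwa [integral_mul_const, eS] at this
  have bD3 : |(∫ y, c₂ y x * Real.exp (-∫ u, φ₂ (x - u) * ρ u) * ρ y)
      - ∫ y, c₂ y x * Real.exp (-∫ u, φ₂ (x - u) * ψ u) * ψ y|
      ≤ C2 * (Φ₂ * N * R + N) := by
    have := integral_diff_le hI3ρ hI3ψ ((hc₂int₁ x).mul_const (Φ₂ * N * R + N)) (fun y => by
      have hfac : c₂ y x * Real.exp (-∫ u, φ₂ (x - u) * ρ u) * ρ y
          - c₂ y x * Real.exp (-∫ u, φ₂ (x - u) * ψ u) * ψ y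
          = c₂ y x * (Real.exp (-∫ u, φ₂ (x - u) * ρ u) * ρ y
            - Real.exp (-∫ u, φ₂ (x - u) * ψ u) * ψ y) := by ring
      rw [hfac, abs_mul, abs_of_nonneg (hc₂nn y x)]
      exact mul_le_mul_of_nonneg_left (prod2_diff (hE2d x) (hE2ρ x).1 (hE2ρ x).2
        (hE2ψ x).1 (hE2ψ x).2 (hρnn y) (hρb y) (hψnn y) (hψb y) (hN y)) (hc₂nn y x))
    rwa [integral_mul_const, hc₂val₁ x] at this
  have bD4 : |(∫ y, c₂ x y * (1 - Real.exp (-∫ u, φ₂ (y - u) * ρ u)) * ρ x)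
      - ∫ y, c₂ x y * (1 - Real.exp (-∫ u, φ₂ (y - u) * ψ u)) * ψ x|
      ≤ C2 * (Φ₂ * N * R + N) := by
    have := integral_diff_le hI4ρ hI4ψ ((hc₂int₂ x).mul_const (Φ₂ * N * R + N)) (fun y => by
      have hfac : c₂ x y * (1 - Real.exp (-∫ u, φ₂ (y - u) * ρ u)) * ρ x
          - c₂ x y * (1 - Real.exp (-∫ u, φ₂ (y - u) * ψ u)) * ψ x
          = c₂ x y * ((1 - Real.exp (-∫ u, φ₂ (y - u) * ρ u)) * ρ x
            - (1 - Real.exp (-∫ u, φ₂ (y - u) * ψ u)) * ψ x) := by ring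
      have hed : |(1 - Real.exp (-∫ u, φ₂ (y - u) * ρ u))
          - (1 - Real.exp (-∫ u, φ₂ (y - u) * ψ u))| ≤ Φ₂ * N := by
        calc |(1 - Real.exp (-∫ u, φ₂ (y - u) * ρ u))
            - (1 - Real.exp (-∫ u, φ₂ (y - u) * ψ u))|
            = |Real.exp (-∫ u, φ₂ (y - u) * ρ u)
              - Real.exp (-∫ u, φ₂ (y - u) * ψ u)| := by
                rw [show (1 - Real.exp (-∫ u, φ₂ (y - u) * ρ u))
                  - (1 - Real.exp (-∫ u, φ₂ (y - u) * ψ u))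
                  = -(Real.exp (-∫ u, φ₂ (y - u) * ρ u)
                    - Real.exp (-∫ u, φ₂ (y - u) * ψ u)) from by ring, abs_neg]
          _ ≤ Φ₂ * N := hE2d y
      rw [hfac, abs_mul, abs_of_nonneg (hc₂nn x y)]
      exact mul_le_mul_of_nonneg_left (prod2_diff hed
        (by linarith [(hE2ρ y).2]) (by linarith [(hE2ρ y).1])
        (by linarith [(hE2ψ y).2]) (by linarith [(hE2ψ y).1])
        (hρnn x) (hρb x) (hψnn x) (hψb x) (hN x)) (hc₂nn x y))
    have hval : (∫ y, c₂ x y * (Φ₂ * N * R + N)) = C2 * (Φ₂ * N * R + N) := by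
      rw [integral_mul_const, hc₂val₂ x]
    rwa [hval] at this
  -- assemble
  have hsplit : R2 c₁ c₂ φ₁ φ₂ ρ x - R2 c₁ c₂ φ₁ φ₂ ψ x
      = 1/2 * ((∫ p : Rd d × Rd d,
          c₁ p.1 p.2 x * Real.exp (-∫ u, φ₁ (x - u) * ρ u) * ρ p.1 * ρ p.2)
        - ∫ p : Rd d × Rd d, c₁ p.1 p.2 x * Real.exp (-∫ u, φ₁ (x - u) * ψ u) * ψ p.1 * ψ p.2)
      + 1/2 * ((∫ p : Rd d × Rd d, (c₁ x p.1 p.2 + c₁ p.1 x p.2) *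
          (1 - Real.exp (-∫ u, φ₁ (p.2 - u) * ρ u)) * ρ x * ρ p.1)
        - ∫ p : Rd d × Rd d, (c₁ x p.1 p.2 + c₁ p.1 x p.2) *
          (1 - Real.exp (-∫ u, φ₁ (p.2 - u) * ψ u)) * ψ x * ψ p.1)
      + ((∫ y, c₂ y x * Real.exp (-∫ u, φ₂ (x - u) * ρ u) * ρ y)
        - ∫ y, c₂ y x * Real.exp (-∫ u, φ₂ (x - u) * ψ u) * ψ y)
      + ((∫ y, c₂ x y * (1 - Real.exp (-∫ u, φ₂ (y - u) * ρ u)) * ρ x)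
        - ∫ y, c₂ x y * (1 - Real.exp (-∫ u, φ₂ (y - u) * ψ u)) * ψ x) := by
    simp only [R2]; rw [e1ρ, e1ψ, e2ρ, e2ψ]; ring
  rw [hsplit]
  set D1 := (∫ p : Rd d × Rd d,
      c₁ p.1 p.2 x * Real.exp (-∫ u, φ₁ (x - u) * ρ u) * ρ p.1 * ρ p.2)
    - ∫ p : Rd d × Rd d, c₁ p.1 p.2 x * Real.exp (-∫ u, φ₁ (x - u) * ψ u) * ψ p.1 * ψ p.2
  set D2 := (∫ p : Rd d × Rd d, (c₁ x p.1 p.2 + c₁ p.1 x p.2) *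
      (1 - Real.exp (-∫ u, φ₁ (p.2 - u) * ρ u)) * ρ x * ρ p.1)
    - ∫ p : Rd d × Rd d, (c₁ x p.1 p.2 + c₁ p.1 x p.2) *
      (1 - Real.exp (-∫ u, φ₁ (p.2 - u) * ψ u)) * ψ x * ψ p.1
  set D3 := (∫ y, c₂ y x * Real.exp (-∫ u, φ₂ (x - u) * ρ u) * ρ y)
    - ∫ y, c₂ y x * Real.exp (-∫ u, φ₂ (x - u) * ψ u) * ψ y
  set D4 := (∫ y, c₂ x y * (1 - Real.exp (-∫ u, φ₂ (y - u) * ρ u)) * ρ x)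
    - ∫ y, c₂ x y * (1 - Real.exp (-∫ u, φ₂ (y - u) * ψ u)) * ψ x
  have habs : |1/2 * D1 + 1/2 * D2 + D3 + D4| ≤ 1/2 * |D1| + 1/2 * |D2| + |D3| + |D4| := by
    calc |1/2 * D1 + 1/2 * D2 + D3 + D4| ≤ |1/2 * D1 + 1/2 * D2 + D3| + |D4| := abs_add_le _ _
      _ ≤ (|1/2 * D1 + 1/2 * D2| + |D3|) + |D4| := add_le_add_left (abs_add_le _ _) _
      _ ≤ ((|1/2 * D1| + |1/2 * D2|) + |D3|) + |D4| :=
          add_le_add_left (add_le_add_left (abs_add_le _ _) _) _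
      _ = 1/2 * |D1| + 1/2 * |D2| + |D3| + |D4| := by
          rw [abs_mul, abs_mul, abs_of_nonneg (by norm_num : (0:ℝ) ≤ 1/2)]
  refine habs.trans ?_
  nlinarith [bD1, bD2, bD3, bD4]
end E
section F
variable {d : ℕ}

lemma memlinf_diff_bdd {f g : Rd d → ℝ} (hf : MemLinf f) (hg : MemLinf g) :
    ∃ M, ∀ x, |f x - g x| ≤ M := by
  obtain ⟨Mf, hMf⟩ := hf.2; obtain ⟨Mg, hMg⟩ := hg.2
  exact ⟨Mf + Mg, fun x => (abs_sub _ _).trans (add_le_add (hMf x) (hMg x))⟩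

lemma ball_linf_bound {T γ C2 r : ℝ} {ρ : ℝ → Rd d → ℝ} (hmem : memB T γ C2 r ρ)
    (hT : 0 ≤ T) (hγC2 : 0 ≤ γ * C2) :
    ∀ t ∈ Icc (0:ℝ) T, linf (ρ t) ≤ r * Real.exp (γ * C2 * T) := by
  obtain ⟨hcont, hLinf, hnn, hnorm⟩ := hmem
  have hlinf_nn : ∀ t ∈ Icc (0:ℝ) T, 0 ≤ linf (ρ t) := fun t ht =>
    (abs_nonneg _).trans (abs_le_linf (hLinf t ht).2 0)
  have hcont' : ContinuousOn (fun t => linf (ρ t)) (Icc 0 T) := by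
    rw [Metric.continuousOn_iff]
    intro t ht ε hε
    obtain ⟨δ, hδ, hs⟩ := hcont t ht ε hε
    refine ⟨δ, hδ, fun s hst hd => ?_⟩
    have hdb : ∃ M, ∀ x, |ρ s x - ρ t x| ≤ M := memlinf_diff_bdd (hLinf s hst) (hLinf t ht)
    have h1 : linf (ρ s) ≤ linf (ρ t) + linf (fun x => ρ s x - ρ t x) := by
      refine ciSup_le fun x => ?_
      calc |ρ s x| = |ρ t x + (ρ s x - ρ t x)| := by ring_nf
        _ ≤ |ρ t x| + |ρ s x - ρ t x| := abs_add_le _ _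
        _ ≤ linf (ρ t) + linf (fun x => ρ s x - ρ t x) :=
            add_le_add (abs_le_linf (hLinf t ht).2 x) (abs_le_linf hdb x)
    have h2 : linf (ρ t) ≤ linf (ρ s) + linf (fun x => ρ s x - ρ t x) := by
      refine ciSup_le fun x => ?_
      calc |ρ t x| = |ρ s x - (ρ s x - ρ t x)| := by ring_nf
        _ ≤ |ρ s x| + |ρ s x - ρ t x| := abs_sub _ _
        _ ≤ linf (ρ s) + linf (fun x => ρ s x - ρ t x) :=
            add_le_add (abs_le_linf (hLinf s hst).2 x) (abs_le_linf hdb x)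
    have h3 := hs s hst hd
    rw [Real.dist_eq, abs_sub_lt_iff]
    exact ⟨by linarith, by linarith⟩
  obtain ⟨M, hM⟩ := isCompact_Icc.exists_bound_of_continuousOn hcont'
  have hBdd : BddAbove (range fun s : Icc (0:ℝ) T =>
      Real.exp (-(γ * C2 * s.1)) * linf (ρ s.1)) := by
    refine ⟨max M 0, ?_⟩; rintro - ⟨s, rfl⟩
    have h1 : Real.exp (-(γ * C2 * s.1)) ≤ 1 :=
      Real.exp_le_one_iff.2 (neg_nonpos.2 (mul_nonneg hγC2 s.2.1))
    have h2 : linf (ρ s.1) ≤ max M 0 := by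
      have := hM s.1 s.2
      rw [Real.norm_eq_abs] at this
      exact le_max_of_le_left ((le_abs_self _).trans this)
    calc Real.exp (-(γ * C2 * s.1)) * linf (ρ s.1) ≤ 1 * linf (ρ s.1) :=
          mul_le_mul_of_nonneg_right h1 (hlinf_nn s.1 s.2)
      _ = linf (ρ s.1) := one_mul _
      _ ≤ max M 0 := h2
  have hterm : ∀ t (ht : t ∈ Icc (0:ℝ) T), Real.exp (-(γ * C2 * t)) * linf (ρ t) ≤ r :=
    fun t ht => (le_ciSup hBdd (⟨t, ht⟩ : Icc (0:ℝ) T)).trans hnorm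
  have hr : 0 ≤ r := by
    have h0 : (0:ℝ) ∈ Icc (0:ℝ) T := left_mem_Icc.2 hT
    have := hterm 0 h0
    have hp : 0 ≤ Real.exp (-(γ * C2 * 0)) * linf (ρ 0) :=
      mul_nonneg (Real.exp_nonneg _) (hlinf_nn 0 h0)
    linarith
  intro t ht
  have hexp : Real.exp (γ * C2 * t) * (Real.exp (-(γ * C2 * t)) * linf (ρ t)) = linf (ρ t) := by
    rw [← mul_assoc, ← Real.exp_add]; simp
  calc linf (ρ t) = Real.exp (γ * C2 * t) * (Real.exp (-(γ * C2 * t)) * linf (ρ t)) := hexp.symm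
    _ ≤ Real.exp (γ * C2 * t) * r := mul_le_mul_of_nonneg_left (hterm t ht) (Real.exp_nonneg _)
    _ ≤ Real.exp (γ * C2 * T) * r := by
        have h := Real.exp_le_exp.2 (mul_le_mul_of_nonneg_left ht.2 hγC2)
        exact mul_le_mul_of_nonneg_right h hr
    _ = r * Real.exp (γ * C2 * T) := mul_comm _ _

lemma ball_ptwise {T γ C2 r : ℝ} {ρ : ℝ → Rd d → ℝ} (hmem : memB T γ C2 r ρ)
    (hT : 0 ≤ T) (hγC2 : 0 ≤ γ * C2) :
    ∀ t ∈ Icc (0:ℝ) T, ∀ x, |ρ t x| ≤ r * Real.exp (γ * C2 * T) := fun t ht x =>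
  (abs_le_linf (hmem.2.1 t ht).2 x).trans (ball_linf_bound hmem hT hγC2 t ht)

lemma ball_diff_ptwise {T γ C2 r : ℝ} {ρ ψ : ℝ → Rd d → ℝ}
    (hρ : memB T γ C2 r ρ) (hψ : memB T γ C2 r ψ) (hT : 0 ≤ T) (hγC2 : 0 ≤ γ * C2) :
    ∀ t ∈ Icc (0:ℝ) T, ∀ x, |ρ t x - ψ t x|
      ≤ Real.exp (γ * C2 * T) * normTg T γ C2 (fun t x => ρ t x - ψ t x) := by
  intro t ht x
  set B := r * Real.exp (γ * C2 * T) with hBdef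
  have hdb : ∀ s (hs : s ∈ Icc (0:ℝ) T), ∃ M, ∀ x, |ρ s x - ψ s x| ≤ M := fun s hs =>
    memlinf_diff_bdd (hρ.2.1 s hs) (hψ.2.1 s hs)
  have hlinfd : ∀ s (hs : s ∈ Icc (0:ℝ) T), linf (fun x => ρ s x - ψ s x) ≤ B + B := by
    intro s hs
    refine ciSup_le fun y => ?_
    calc |ρ s y - ψ s y| ≤ |ρ s y| + |ψ s y| := abs_sub _ _
      _ ≤ B + B := add_le_add (ball_ptwise hρ hT hγC2 s hs y) (ball_ptwise hψ hT hγC2 s hs y)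
  have hlinfd_nn : ∀ s (hs : s ∈ Icc (0:ℝ) T), 0 ≤ linf (fun x => ρ s x - ψ s x) := fun s hs =>
    (abs_nonneg _).trans (abs_le_linf (hdb s hs) 0)
  have hBdd : BddAbove (range fun s : Icc (0:ℝ) T =>
      Real.exp (-(γ * C2 * s.1)) * linf (fun x => ρ s.1 x - ψ s.1 x)) := by
    refine ⟨B + B, ?_⟩; rintro - ⟨s, rfl⟩
    have h1 : Real.exp (-(γ * C2 * s.1)) ≤ 1 :=
      Real.exp_le_one_iff.2 (neg_nonpos.2 (mul_nonneg hγC2 s.2.1))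
    calc Real.exp (-(γ * C2 * s.1)) * linf (fun x => ρ s.1 x - ψ s.1 x)
        ≤ 1 * linf (fun x => ρ s.1 x - ψ s.1 x) :=
          mul_le_mul_of_nonneg_right h1 (hlinfd_nn s.1 s.2)
      _ = linf (fun x => ρ s.1 x - ψ s.1 x) := one_mul _
      _ ≤ B + B := hlinfd s.1 s.2
  set Ns := normTg T γ C2 (fun t x => ρ t x - ψ t x) with hNdef
  have hterm : Real.exp (-(γ * C2 * t)) * linf (fun x => ρ t x - ψ t x) ≤ Ns :=
    le_ciSup hBdd (⟨t, ht⟩ : Icc (0:ℝ) T)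
  have hNs_nn : 0 ≤ Ns := le_trans
    (mul_nonneg (Real.exp_nonneg _) (hlinfd_nn t ht)) hterm
  have hexp : Real.exp (γ * C2 * t) * (Real.exp (-(γ * C2 * t))
      * linf (fun x => ρ t x - ψ t x)) = linf (fun x => ρ t x - ψ t x) := by
    rw [← mul_assoc, ← Real.exp_add]; simp
  calc |ρ t x - ψ t x| ≤ linf (fun x => ρ t x - ψ t x) := abs_le_linf (hdb t ht) x
    _ = Real.exp (γ * C2 * t) * (Real.exp (-(γ * C2 * t))
        * linf (fun x => ρ t x - ψ t x)) := hexp.symm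
    _ ≤ Real.exp (γ * C2 * t) * Ns := mul_le_mul_of_nonneg_left hterm (Real.exp_nonneg _)
    _ ≤ Real.exp (γ * C2 * T) * Ns := mul_le_mul_of_nonneg_right
        (Real.exp_le_exp.2 (mul_le_mul_of_nonneg_left ht.2 hγC2)) hNs_nn

lemma curve_contOn {T : ℝ} {ρ : ℝ → Rd d → ℝ} (hcont : LinfContOn (Icc 0 T) ρ)
    (hLinf : ∀ t ∈ Icc (0:ℝ) T, MemLinf (ρ t)) {G : (Rd d → ℝ) → ℝ} {K : ℝ} (hK : 0 ≤ K)
    (hlip : ∀ s ∈ Icc (0:ℝ) T, ∀ t ∈ Icc (0:ℝ) T, ∀ N : ℝ, (∀ y, |ρ s y - ρ t y| ≤ N) →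
      |G (ρ s) - G (ρ t)| ≤ K * N) :
    ContinuousOn (fun s => G (ρ s)) (Icc 0 T) := by
  rw [Metric.continuousOn_iff]
  intro t ht ε hε
  have hK1 : (0:ℝ) < K + 1 := by linarith
  obtain ⟨δ, hδ, hs⟩ := hcont t ht (ε / (K + 1)) (by positivity)
  refine ⟨δ, hδ, fun s hst hd => ?_⟩
  have hdb : ∃ M, ∀ x, |ρ s x - ρ t x| ≤ M := memlinf_diff_bdd (hLinf s hst) (hLinf t ht)
  have h1 := hlip s hst t ht _ (fun y => abs_le_linf hdb y)
  have h2 := hs s hst hd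
  have hKN : K * linf (fun x => ρ s x - ρ t x) ≤ K * (ε / (K + 1)) :=
    mul_le_mul_of_nonneg_left h2.le hK
  have h4 : K * (ε / (K + 1)) < ε := by
    rw [show K * (ε / (K + 1)) = K * ε / (K + 1) from by ring, div_lt_iff₀ hK1]
    nlinarith
  rw [Real.dist_eq]
  calc |G (ρ s) - G (ρ t)| ≤ K * linf (fun x => ρ s x - ρ t x) := h1
    _ < ε := by linarith
end F
set_option maxHeartbeats 2000000 in
theorem statement2 {d : ℕ} (hd : 1 ≤ d)
    (c₁ : Rd d → Rd d → Rd d → ℝ) (C1 : ℝ)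
    (hc₁meas : Measurable fun p : Rd d × Rd d × Rd d => c₁ p.1 p.2.1 p.2.2)
    (hc₁nn : ∀ x y z, 0 ≤ c₁ x y z)
    (hc₁sym : ∀ x y z, c₁ x y z = c₁ y x z)
    (hc₁int₁₂ : ∀ z, Integrable fun p : Rd d × Rd d => c₁ p.1 p.2 z)
    (hc₁int₁₃ : ∀ y, Integrable fun p : Rd d × Rd d => c₁ p.1 y p.2)
    (hc₁int₂₃ : ∀ x, Integrable fun p : Rd d × Rd d => c₁ x p.1 p.2)
    (hc₁val₁₂ : ∀ z, (∫ x, ∫ y, c₁ x y z) = C1)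
    (hc₁val₁₃ : ∀ y, (∫ x, ∫ z, c₁ x y z) = C1)
    (hc₁val₂₃ : ∀ x, (∫ y, ∫ z, c₁ x y z) = C1)
    (c₂ : Rd d → Rd d → ℝ) (C2 : ℝ)
    (hc₂meas : Measurable fun p : Rd d × Rd d => c₂ p.1 p.2)
    (hc₂nn : ∀ x y, 0 ≤ c₂ x y)
    (hc₂int₁ : ∀ y, Integrable fun x => c₂ x y)
    (hc₂int₂ : ∀ x, Integrable fun y => c₂ x y)
    (hc₂val₁ : ∀ y, (∫ x, c₂ x y) = C2)
    (hc₂val₂ : ∀ x, (∫ y, c₂ x y) = C2)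
    (φ₁ : Rd d → ℝ) (Φ₁ : ℝ) (hφ₁meas : Measurable φ₁) (hφ₁nn : ∀ u, 0 ≤ φ₁ u)
    (hφ₁int : Integrable φ₁) (hφ₁val : (∫ u, φ₁ u) = Φ₁)
    (φ₂ : Rd d → ℝ) (Φ₂ : ℝ) (hφ₂meas : Measurable φ₂) (hφ₂nn : ∀ u, 0 ≤ φ₂ u)
    (hφ₂int : Integrable φ₂) (hφ₂val : (∫ u, φ₂ u) = Φ₂)
    (ρ₀ : Rd d → ℝ) (hρ₀mem : MemLinf ρ₀) (hρ₀nn : ∀ x, 0 ≤ ρ₀ x)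
    (r : ℝ) (hr : linf ρ₀ ≤ r)
    (γ Tmax : ℝ) (hγ : 0 < γ) (hTmax : 0 < Tmax)
    (hF : ∀ T : ℝ, 0 ≤ T → T ≤ Tmax → ∀ ρ : ℝ → Rd d → ℝ, memB T γ C2 r ρ →
      memB T γ C2 r (Fmap c₁ c₂ φ₁ φ₂ C2 ρ₀ ρ)) :
    ∃ T' : ℝ, 0 < T' ∧ T' ≤ Tmax ∧ ∃ C : ℝ, C < 1 ∧
      ∀ ρ ψ : ℝ → Rd d → ℝ, memB T' γ C2 r ρ → memB T' γ C2 r ψ →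
        ρ 0 = ρ₀ → ψ 0 = ρ₀ →
        normTg T' γ C2
            (fun t x => Fmap c₁ c₂ φ₁ φ₂ C2 ρ₀ ρ t x - Fmap c₁ c₂ φ₁ φ₂ C2 ρ₀ ψ t x)
          ≤ C * normTg T' γ C2 (fun t x => ρ t x - ψ t x) := by
  classical
  -- nonnegativity of the constants
  have hC1 : 0 ≤ C1 := by
    rw [← hc₁val₂₃ 0]
    exact integral_nonneg fun y => integral_nonneg fun z => hc₁nn _ _ _
  have hC2 : 0 ≤ C2 := by
    rw [← hc₂val₂ 0]; exact integral_nonneg fun y => hc₂nn _ _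
  have hΦ₁ : 0 ≤ Φ₁ := by rw [← hφ₁val]; exact integral_nonneg hφ₁nn
  have hΦ₂ : 0 ≤ Φ₂ := by rw [← hφ₂val]; exact integral_nonneg hφ₂nn
  have hrnn : 0 ≤ r := le_trans ((abs_nonneg _).trans (abs_le_linf hρ₀mem.2 0)) hr
  have hγC2 : 0 ≤ γ * C2 := mul_nonneg hγ.le hC2
  set E := Real.exp (γ * C2 * Tmax) with hEdef
  have hEnn : 0 ≤ E := Real.exp_nonneg _
  set R := r * E with hRdef
  have hRnn : 0 ≤ R := mul_nonneg hrnn hEnn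
  set KR := 3/2 * C1 * (Φ₁ * (R * R) + 2 * R) + 2 * C2 * (Φ₂ * R + 1) with hKRdef
  have hKRnn : 0 ≤ KR := by
    rw [hKRdef]
    have h1 : 0 ≤ Φ₁ * (R * R) + 2 * R :=
      add_nonneg (mul_nonneg hΦ₁ (mul_nonneg hRnn hRnn)) (by linarith)
    have h2 : 0 ≤ Φ₂ * R + 1 := by nlinarith
    nlinarith
  set KB := 3/2 * C1 * (R * R) + 2 * (C2 * R) with hKBdef
  have hKBnn : 0 ≤ KB := by rw [hKBdef]; nlinarith
  set KT := E * (r * C1 + KR + KB * C1 * Tmax) with hKTdef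
  have hKTnn : 0 ≤ KT := by
    rw [hKTdef]
    exact mul_nonneg hEnn (add_nonneg (add_nonneg (mul_nonneg hrnn hC1) hKRnn)
      (mul_nonneg (mul_nonneg hKBnn hC1) hTmax.le))
  set T' := min Tmax (1 / (2 * (KT + 1))) with hT'def
  have hT'pos : 0 < T' := lt_min hTmax (by positivity)
  have hT'le : T' ≤ Tmax := min_le_left _ _
  have hCshrink : KT * T' < 1 := by
    have h1 : KT * T' ≤ KT * (1 / (2 * (KT + 1))) :=
      mul_le_mul_of_nonneg_left (min_le_right _ _) hKTnn
    have h2 : KT * (1 / (2 * (KT + 1))) < 1 := by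
      rw [mul_one_div, div_lt_one (by positivity)]; linarith
    linarith
  refine ⟨T', hT'pos, hT'le, KT * T', hCshrink, ?_⟩
  intro ρ ψ hρB hψB hρ0 hψ0
  have h0mem : (0:ℝ) ∈ Icc (0:ℝ) T' := left_mem_Icc.2 hT'pos.le
  have hexpT' : Real.exp (γ * C2 * T') ≤ E := by
    rw [hEdef]; exact Real.exp_le_exp.2 (mul_le_mul_of_nonneg_left hT'le hγC2)
  -- uniform bounds on the curves
  have hρbd : ∀ t ∈ Icc (0:ℝ) T', ∀ y, |ρ t y| ≤ R := by
    intro t ht y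
    refine (ball_ptwise hρB hT'pos.le hγC2 t ht y).trans ?_
    rw [hRdef]; exact mul_le_mul_of_nonneg_left hexpT' hrnn
  have hψbd : ∀ t ∈ Icc (0:ℝ) T', ∀ y, |ψ t y| ≤ R := by
    intro t ht y
    refine (ball_ptwise hψB hT'pos.le hγC2 t ht y).trans ?_
    rw [hRdef]; exact mul_le_mul_of_nonneg_left hexpT' hrnn
  have hρm : ∀ t ∈ Icc (0:ℝ) T', Measurable (ρ t) := fun t ht => (hρB.2.1 t ht).1
  have hψm : ∀ t ∈ Icc (0:ℝ) T', Measurable (ψ t) := fun t ht => (hψB.2.1 t ht).1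
  have hρnn : ∀ t ∈ Icc (0:ℝ) T', ∀ y, 0 ≤ ρ t y := hρB.2.2.1
  have hψnn : ∀ t ∈ Icc (0:ℝ) T', ∀ y, 0 ≤ ψ t y := hψB.2.2.1
  have hρub : ∀ t ∈ Icc (0:ℝ) T', ∀ y, ρ t y ≤ R := fun t ht y =>
    (le_abs_self _).trans (hρbd t ht y)
  have hψub : ∀ t ∈ Icc (0:ℝ) T', ∀ y, ψ t y ≤ R := fun t ht y =>
    (le_abs_self _).trans (hψbd t ht y)
  set Ns := normTg T' γ C2 (fun t x => ρ t x - ψ t x) with hNsdef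
  have hNsnn : 0 ≤ Ns := by
    have h := ball_diff_ptwise hρB hψB hT'pos.le hγC2 0 h0mem 0
    have he := Real.exp_pos (γ * C2 * T')
    have ha := abs_nonneg (ρ 0 0 - ψ 0 0)
    by_contra hcon
    push_neg at hcon
    nlinarith [mul_pos he (neg_pos.2 hcon)]
  have hNb : ∀ t ∈ Icc (0:ℝ) T', ∀ y, |ρ t y - ψ t y| ≤ E * Ns := by
    intro t ht y
    refine (ball_diff_ptwise hρB hψB hT'pos.le hγC2 t ht y).trans ?_
    exact mul_le_mul_of_nonneg_right hexpT' hNsnn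
  -- the pointwise-in-(t,x) estimate
  have hpt : ∀ t ∈ Icc (0:ℝ) T', ∀ x,
      |Fmap c₁ c₂ φ₁ φ₂ C2 ρ₀ ρ t x - Fmap c₁ c₂ φ₁ φ₂ C2 ρ₀ ψ t x| ≤ KT * T' * Ns := by
    intro t ht x
    have h0t : (0:ℝ) ≤ t := ht.1
    have htT' : t ≤ T' := ht.2
    have hsubIcc : Icc (0:ℝ) t ⊆ Icc 0 T' := Icc_subset_Icc le_rfl htT'
    -- continuity of s ↦ hker (ρ s) x and s ↦ R2 (ρ s) x
    have hHρc : ContinuousOn (fun s => hker c₁ C2 (ρ s) x) (Icc 0 T') := by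
      refine curve_contOn (G := fun f => hker c₁ C2 f x) hρB.1 (fun s hs => hρB.2.1 s hs) hC1 ?_
      intro s hs t' ht' N hNx
      exact hker_diff hc₁nn hc₁int₁₃ hc₁int₂₃ hc₁val₁₃ hc₁val₂₃ (hρm s hs) (hρm t' ht')
        (hρbd s hs) (hρbd t' ht') hNx x
    have hHψc : ContinuousOn (fun s => hker c₁ C2 (ψ s) x) (Icc 0 T') := by
      refine curve_contOn (G := fun f => hker c₁ C2 f x) hψB.1 (fun s hs => hψB.2.1 s hs) hC1 ?_
      intro s hs t' ht' N hNx
      exact hker_diff hc₁nn hc₁int₁₃ hc₁int₂₃ hc₁val₁₃ hc₁val₂₃ (hψm s hs) (hψm t' ht')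
        (hψbd s hs) (hψbd t' ht') hNx x
    have hGρc : ContinuousOn (fun s => R2 c₁ c₂ φ₁ φ₂ (ρ s) x) (Icc 0 T') := by
      refine curve_contOn (G := fun f => R2 c₁ c₂ φ₁ φ₂ f x) hρB.1 (fun s hs => hρB.2.1 s hs) hKRnn ?_
      intro s hs t' ht' N hNx
      rw [hKRdef]
      exact R2_diff hc₁nn hc₁int₁₂ hc₁int₁₃ hc₁int₂₃ hc₁val₁₂ hc₁val₁₃ hc₁val₂₃ hc₂nn
        hc₂int₁ hc₂int₂ hc₂val₁ hc₂val₂ hφ₁meas hφ₁nn hφ₁int hφ₁val hφ₂meas hφ₂nn hφ₂int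
        hφ₂val (hρm s hs) (hρm t' ht') (hρnn s hs) (hρnn t' ht') (hρub s hs) (hρub t' ht')
        hNx x
    have hGψc : ContinuousOn (fun s => R2 c₁ c₂ φ₁ φ₂ (ψ s) x) (Icc 0 T') := by
      refine curve_contOn (G := fun f => R2 c₁ c₂ φ₁ φ₂ f x) hψB.1 (fun s hs => hψB.2.1 s hs) hKRnn ?_
      intro s hs t' ht' N hNx
      rw [hKRdef]
      exact R2_diff hc₁nn hc₁int₁₂ hc₁int₁₃ hc₁int₂₃ hc₁val₁₂ hc₁val₁₃ hc₁val₂₃ hc₂nn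
        hc₂int₁ hc₂int₂ hc₂val₁ hc₂val₂ hφ₁meas hφ₁nn hφ₁int hφ₁val hφ₂meas hφ₂nn hφ₂int
        hφ₂val (hψm s hs) (hψm t' ht') (hψnn s hs) (hψnn t' ht') (hψub s hs) (hψub t' ht')
        hNx x
    -- interval integrability of the kernels
    have hHρi : ∀ s ∈ Icc (0:ℝ) t, IntervalIntegrable (fun σ => hker c₁ C2 (ρ σ) x)
        volume s t := by
      intro s hs
      apply ContinuousOn.intervalIntegrable
      refine hHρc.mono ?_
      rw [uIcc_of_le hs.2]; exact Icc_subset_Icc hs.1 htT'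
    have hHψi : ∀ s ∈ Icc (0:ℝ) t, IntervalIntegrable (fun σ => hker c₁ C2 (ψ σ) x)
        volume s t := by
      intro s hs
      apply ContinuousOn.intervalIntegrable
      refine hHψc.mono ?_
      rw [uIcc_of_le hs.2]; exact Icc_subset_Icc hs.1 htT'
    -- nonnegativity of the time integrals of hker
    have hIρnn : ∀ s ∈ Icc (0:ℝ) t, 0 ≤ ∫ σ in s..t, hker c₁ C2 (ρ σ) x := by
      intro s hs
      refine intervalIntegral.integral_nonneg hs.2 fun σ hσ => ?_
      exact hker_nonneg hc₁nn hC2 (hρnn σ ⟨hs.1.trans hσ.1, hσ.2.trans htT'⟩) x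
    have hIψnn : ∀ s ∈ Icc (0:ℝ) t, 0 ≤ ∫ σ in s..t, hker c₁ C2 (ψ σ) x := by
      intro s hs
      refine intervalIntegral.integral_nonneg hs.2 fun σ hσ => ?_
      exact hker_nonneg hc₁nn hC2 (hψnn σ ⟨hs.1.trans hσ.1, hσ.2.trans htT'⟩) x
    -- difference of hker time integrals
    have hHd : ∀ σ ∈ Icc (0:ℝ) T',
        |hker c₁ C2 (ρ σ) x - hker c₁ C2 (ψ σ) x| ≤ C1 * (E * Ns) := fun σ hσ =>
      hker_diff hc₁nn hc₁int₁₃ hc₁int₂₃ hc₁val₁₃ hc₁val₂₃ (hρm σ hσ) (hψm σ hσ)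
        (hρbd σ hσ) (hψbd σ hσ) (fun y => hNb σ hσ y) x
    have hHintd : ∀ s ∈ Icc (0:ℝ) t,
        |(∫ σ in s..t, hker c₁ C2 (ρ σ) x) - ∫ σ in s..t, hker c₁ C2 (ψ σ) x|
          ≤ (t - s) * (C1 * (E * Ns)) := by
      intro s hs
      rw [← intervalIntegral.integral_sub (hHρi s hs) (hHψi s hs)]
      calc |∫ σ in s..t, (hker c₁ C2 (ρ σ) x - hker c₁ C2 (ψ σ) x)|
          ≤ ∫ σ in s..t, |hker c₁ C2 (ρ σ) x - hker c₁ C2 (ψ σ) x| :=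
            intervalIntegral.abs_integral_le_integral_abs hs.2
        _ ≤ ∫ _σ in s..t, C1 * (E * Ns) := by
            refine intervalIntegral.integral_mono_on hs.2
              ((hHρi s hs).sub (hHψi s hs)).abs intervalIntegrable_const ?_
            intro σ hσ
            exact hHd σ ⟨hs.1.trans hσ.1, hσ.2.trans htT'⟩
        _ = (t - s) * (C1 * (E * Ns)) := by
            rw [intervalIntegral.integral_const, smul_eq_mul]
    -- first term
    have hterm1 : |ρ₀ x * Real.exp (-∫ s in (0:ℝ)..t, hker c₁ C2 (ρ s) x)
        - ρ₀ x * Real.exp (-∫ s in (0:ℝ)..t, hker c₁ C2 (ψ s) x)|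
        ≤ r * (t * (C1 * (E * Ns))) := by
      rw [← mul_sub, abs_mul]
      have h1 : |ρ₀ x| ≤ r := (abs_le_linf hρ₀mem.2 x).trans hr
      have h0mem' : (0:ℝ) ∈ Icc (0:ℝ) t := left_mem_Icc.2 h0t
      have h2 : |Real.exp (-∫ s in (0:ℝ)..t, hker c₁ C2 (ρ s) x)
          - Real.exp (-∫ s in (0:ℝ)..t, hker c₁ C2 (ψ s) x)| ≤ t * (C1 * (E * Ns)) := by
        refine (exp_neg_lip (hIρnn 0 h0mem') (hIψnn 0 h0mem')).trans ?_
        have := hHintd 0 h0mem'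
        rwa [sub_zero] at this
      exact mul_le_mul h1 h2 (abs_nonneg _) hrnn
    -- continuity of the primitives and integrability of the integrands
    have hprimρ : ContinuousOn (fun s => ∫ σ in s..t, hker c₁ C2 (ρ σ) x) (Icc 0 t) := by
      have hio : IntegrableOn (fun σ => hker c₁ C2 (ρ σ) x) (uIcc 0 t) volume := by
        rw [uIcc_of_le h0t]
        exact (hHρc.mono hsubIcc).integrableOn_compact isCompact_Icc
      have h := intervalIntegral.continuousOn_primitive_interval_left hio
      rwa [uIcc_of_le h0t] at h
    have hprimψ : ContinuousOn (fun s => ∫ σ in s..t, hker c₁ C2 (ψ σ) x) (Icc 0 t) := by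
      have hio : IntegrableOn (fun σ => hker c₁ C2 (ψ σ) x) (uIcc 0 t) volume := by
        rw [uIcc_of_le h0t]
        exact (hHψc.mono hsubIcc).integrableOn_compact isCompact_Icc
      have h := intervalIntegral.continuousOn_primitive_interval_left hio
      rwa [uIcc_of_le h0t] at h
    have hGEρi : IntervalIntegrable (fun s => R2 c₁ c₂ φ₁ φ₂ (ρ s) x *
        Real.exp (-∫ σ in s..t, hker c₁ C2 (ρ σ) x)) volume 0 t := by
      apply ContinuousOn.intervalIntegrable
      rw [uIcc_of_le h0t]
      exact (hGρc.mono hsubIcc).mul (Real.continuous_exp.comp_continuousOn hprimρ.neg)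
    have hGEψi : IntervalIntegrable (fun s => R2 c₁ c₂ φ₁ φ₂ (ψ s) x *
        Real.exp (-∫ σ in s..t, hker c₁ C2 (ψ σ) x)) volume 0 t := by
      apply ContinuousOn.intervalIntegrable
      rw [uIcc_of_le h0t]
      exact (hGψc.mono hsubIcc).mul (Real.continuous_exp.comp_continuousOn hprimψ.neg)
    -- pointwise bound on integrand difference
    have hptd : ∀ s ∈ Icc (0:ℝ) t,
        |R2 c₁ c₂ φ₁ φ₂ (ρ s) x * Real.exp (-∫ σ in s..t, hker c₁ C2 (ρ σ) x)
          - R2 c₁ c₂ φ₁ φ₂ (ψ s) x * Real.exp (-∫ σ in s..t, hker c₁ C2 (ψ σ) x)|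
        ≤ KR * (E * Ns) + KB * (Tmax * (C1 * (E * Ns))) := by
      intro s hs
      have hsT' : s ∈ Icc (0:ℝ) T' := ⟨hs.1, hs.2.trans htT'⟩
      have hGd : |R2 c₁ c₂ φ₁ φ₂ (ρ s) x - R2 c₁ c₂ φ₁ φ₂ (ψ s) x| ≤ KR * (E * Ns) := by
        rw [hKRdef]
        exact R2_diff hc₁nn hc₁int₁₂ hc₁int₁₃ hc₁int₂₃ hc₁val₁₂ hc₁val₁₃ hc₁val₂₃ hc₂nn
          hc₂int₁ hc₂int₂ hc₂val₁ hc₂val₂ hφ₁meas hφ₁nn hφ₁int hφ₁val hφ₂meas hφ₂nn hφ₂int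
          hφ₂val (hρm s hsT') (hψm s hsT') (hρnn s hsT') (hψnn s hsT') (hρub s hsT')
          (hψub s hsT') (fun y => hNb s hsT' y) x
      have hGψb : |R2 c₁ c₂ φ₁ φ₂ (ψ s) x| ≤ KB := by
        rw [hKBdef]
        exact R2_bound hc₁nn hc₁int₁₂ hc₁int₁₃ hc₁int₂₃ hc₁val₁₂ hc₁val₁₃ hc₁val₂₃ hc₂nn
          hc₂int₁ hc₂int₂ hc₂val₁ hc₂val₂ hφ₁meas hφ₁nn hφ₂meas hφ₂nn (hψm s hsT')
          (hψnn s hsT') (hψub s hsT') x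
      have hEρ0 : 0 ≤ Real.exp (-∫ σ in s..t, hker c₁ C2 (ρ σ) x) := (Real.exp_pos _).le
      have hEρ1 : Real.exp (-∫ σ in s..t, hker c₁ C2 (ρ σ) x) ≤ 1 :=
        Real.exp_le_one_iff.2 (neg_nonpos.2 (hIρnn s hs))
      have hEd : |Real.exp (-∫ σ in s..t, hker c₁ C2 (ρ σ) x)
          - Real.exp (-∫ σ in s..t, hker c₁ C2 (ψ σ) x)| ≤ (t - s) * (C1 * (E * Ns)) :=
        (exp_neg_lip (hIρnn s hs) (hIψnn s hs)).trans (hHintd s hs)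
      have htsT : t - s ≤ Tmax := by
        have := hs.1
        linarith [htT'.trans hT'le]
      have hCENs : 0 ≤ C1 * (E * Ns) := mul_nonneg hC1 (mul_nonneg hEnn hNsnn)
      have hsplit2 : R2 c₁ c₂ φ₁ φ₂ (ρ s) x * Real.exp (-∫ σ in s..t, hker c₁ C2 (ρ σ) x)
          - R2 c₁ c₂ φ₁ φ₂ (ψ s) x * Real.exp (-∫ σ in s..t, hker c₁ C2 (ψ σ) x)
          = (R2 c₁ c₂ φ₁ φ₂ (ρ s) x - R2 c₁ c₂ φ₁ φ₂ (ψ s) x) *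
              Real.exp (-∫ σ in s..t, hker c₁ C2 (ρ σ) x)
            + R2 c₁ c₂ φ₁ φ₂ (ψ s) x * (Real.exp (-∫ σ in s..t, hker c₁ C2 (ρ σ) x)
              - Real.exp (-∫ σ in s..t, hker c₁ C2 (ψ σ) x)) := by ring
      rw [hsplit2]
      have h1 := abs_mul_le' hGd (abs01 hEρ0 hEρ1)
      have h2 := abs_mul_le' hGψb hEd
      have h3 : KB * ((t - s) * (C1 * (E * Ns))) ≤ KB * (Tmax * (C1 * (E * Ns))) :=
        mul_le_mul_of_nonneg_left (mul_le_mul_of_nonneg_right htsT hCENs) hKBnn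
      calc |(R2 c₁ c₂ φ₁ φ₂ (ρ s) x - R2 c₁ c₂ φ₁ φ₂ (ψ s) x) *
            Real.exp (-∫ σ in s..t, hker c₁ C2 (ρ σ) x)
          + R2 c₁ c₂ φ₁ φ₂ (ψ s) x * (Real.exp (-∫ σ in s..t, hker c₁ C2 (ρ σ) x)
            - Real.exp (-∫ σ in s..t, hker c₁ C2 (ψ σ) x))|
          ≤ |(R2 c₁ c₂ φ₁ φ₂ (ρ s) x - R2 c₁ c₂ φ₁ φ₂ (ψ s) x) *
            Real.exp (-∫ σ in s..t, hker c₁ C2 (ρ σ) x)|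
          + |R2 c₁ c₂ φ₁ φ₂ (ψ s) x * (Real.exp (-∫ σ in s..t, hker c₁ C2 (ρ σ) x)
            - Real.exp (-∫ σ in s..t, hker c₁ C2 (ψ σ) x))| := abs_add_le _ _
        _ ≤ KR * (E * Ns) * 1 + KB * ((t - s) * (C1 * (E * Ns))) := add_le_add h1 h2
        _ ≤ KR * (E * Ns) + KB * (Tmax * (C1 * (E * Ns))) := by
            rw [mul_one]; exact add_le_add_right h3 _
    -- second term
    have hterm2 : |(∫ s in (0:ℝ)..t, R2 c₁ c₂ φ₁ φ₂ (ρ s) x *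
          Real.exp (-∫ σ in s..t, hker c₁ C2 (ρ σ) x))
        - ∫ s in (0:ℝ)..t, R2 c₁ c₂ φ₁ φ₂ (ψ s) x *
          Real.exp (-∫ σ in s..t, hker c₁ C2 (ψ σ) x)|
        ≤ t * (KR * (E * Ns) + KB * (Tmax * (C1 * (E * Ns)))) := by
      rw [← intervalIntegral.integral_sub hGEρi hGEψi]
      calc |∫ s in (0:ℝ)..t, (R2 c₁ c₂ φ₁ φ₂ (ρ s) x *
            Real.exp (-∫ σ in s..t, hker c₁ C2 (ρ σ) x)
            - R2 c₁ c₂ φ₁ φ₂ (ψ s) x * Real.exp (-∫ σ in s..t, hker c₁ C2 (ψ σ) x))|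
          ≤ ∫ s in (0:ℝ)..t, |R2 c₁ c₂ φ₁ φ₂ (ρ s) x *
            Real.exp (-∫ σ in s..t, hker c₁ C2 (ρ σ) x)
            - R2 c₁ c₂ φ₁ φ₂ (ψ s) x * Real.exp (-∫ σ in s..t, hker c₁ C2 (ψ σ) x)| :=
            intervalIntegral.abs_integral_le_integral_abs h0t
        _ ≤ ∫ _s in (0:ℝ)..t, (KR * (E * Ns) + KB * (Tmax * (C1 * (E * Ns)))) := by
            refine intervalIntegral.integral_mono_on h0t (hGEρi.sub hGEψi).abs
              intervalIntegrable_const ?_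
            intro s hs
            exact hptd s hs
        _ = t * (KR * (E * Ns) + KB * (Tmax * (C1 * (E * Ns)))) := by
            rw [intervalIntegral.integral_const, smul_eq_mul, sub_zero]
    -- combine
    have habs2 : ∀ a a' b b' : ℝ, |a + b - (a' + b')| ≤ |a - a'| + |b - b'| := by
      intro a a' b b'
      rw [show a + b - (a' + b') = (a - a') + (b - b') from by ring]
      exact abs_add_le _ _
    have hcomb : |Fmap c₁ c₂ φ₁ φ₂ C2 ρ₀ ρ t x - Fmap c₁ c₂ φ₁ φ₂ C2 ρ₀ ψ t x|
        ≤ r * (t * (C1 * (E * Ns))) + t * (KR * (E * Ns) + KB * (Tmax * (C1 * (E * Ns)))) := by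
      simp only [Fmap]
      exact (habs2 _ _ _ _).trans (add_le_add hterm1 hterm2)
    refine hcomb.trans ?_
    have hfact : r * (t * (C1 * (E * Ns))) + t * (KR * (E * Ns) + KB * (Tmax * (C1 * (E * Ns))))
        = t * ((E * (r * C1 + KR + KB * C1 * Tmax)) * Ns) := by ring
    rw [hfact, ← hKTdef]
    have hx1 : 0 ≤ KT * Ns := mul_nonneg hKTnn hNsnn
    calc t * (KT * Ns) ≤ T' * (KT * Ns) := mul_le_mul_of_nonneg_right htT' hx1
      _ = KT * T' * Ns := by ring
  -- conclude via the sup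
  haveI : Nonempty (Icc (0:ℝ) T') := ⟨⟨0, h0mem⟩⟩
  refine ciSup_le fun tt => ?_
  obtain ⟨t, ht⟩ := tt
  have hlinf_le : linf (fun x => Fmap c₁ c₂ φ₁ φ₂ C2 ρ₀ ρ t x
      - Fmap c₁ c₂ φ₁ φ₂ C2 ρ₀ ψ t x) ≤ KT * T' * Ns := linf_le (hpt t ht)
  have hlinf_nn : 0 ≤ linf (fun x => Fmap c₁ c₂ φ₁ φ₂ C2 ρ₀ ρ t x
      - Fmap c₁ c₂ φ₁ φ₂ C2 ρ₀ ψ t x) :=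
    (abs_nonneg _).trans (abs_le_linf ⟨KT * T' * Ns, hpt t ht⟩ 0)
  have hexple : Real.exp (-(γ * C2 * t)) ≤ 1 :=
    Real.exp_le_one_iff.2 (neg_nonpos.2 (mul_nonneg hγC2 ht.1))
  calc Real.exp (-(γ * C2 * t)) * linf (fun x => Fmap c₁ c₂ φ₁ φ₂ C2 ρ₀ ρ t x
        - Fmap c₁ c₂ φ₁ φ₂ C2 ρ₀ ψ t x)
      ≤ 1 * linf (fun x => Fmap c₁ c₂ φ₁ φ₂ C2 ρ₀ ρ t x
        - Fmap c₁ c₂ φ₁ φ₂ C2 ρ₀ ψ t x) := mul_le_mul_of_nonneg_right hexple hlinf_nn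
    _ = linf (fun x => Fmap c₁ c₂ φ₁ φ₂ C2 ρ₀ ρ t x
        - Fmap c₁ c₂ φ₁ φ₂ C2 ρ₀ ψ t x) := one_mul _
    _ ≤ KT * T' * Ns := hlinf_le
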